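/- arXiv:2507.01268 — 4 statements merged into one kernel-verified Lean document; each statement's English description precedes it below -/
import Mathlib

section
/- The conjugator length function of every affine (irreducible) Coxeter group, with respect to its standard generating set, grows linearly. -/
noncomputable section

/-- Euclidean `n`-space. -/
abbrev En (n : ℕ) : Type := EuclideanSpace ℝ (Fin n)

/-- The orthogonal group of Euclidean `n`-space, realized as linear isometries. -/
abbrev OrthGrp (n : ℕ) : Type := En n ≃ₗᵢ[ℝ] En n

/-- The action of the orthogonal group on the (multiplicatively written) translation group. -/
def rotAction (n : ℕ) : OrthGrp n →* MulAut (Multiplicative (En n)) where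
  toFun A := AddEquiv.toMultiplicative A.toLinearEquiv.toAddEquiv
  map_one' := by ext x; rfl
  map_mul' A B := by ext x; rfl

/-- The isometry group `Isom(𝔼ⁿ) = T ⋊ O(n)`. -/
abbrev IsomE (n : ℕ) : Type :=
  SemidirectProduct (Multiplicative (En n)) (OrthGrp n) (rotAction n)

instance (n : ℕ) : TopologicalSpace (OrthGrp n) :=
  TopologicalSpace.induced (fun A => (A : En n → En n)) inferInstance

instance (n : ℕ) : TopologicalSpace (IsomE n) :=
  TopologicalSpace.induced (fun g => (g.left, g.right)) inferInstance

/-- The translation subgroup `T` of `Isom(𝔼ⁿ)`. -/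
def transSubgroup (n : ℕ) : Subgroup (IsomE n) := SemidirectProduct.inl.range

/-- The orthogonal subgroup `O(n)` of `Isom(𝔼ⁿ)`. -/
def sphSubgroup (n : ℕ) : Subgroup (IsomE n) := SemidirectProduct.inr.range

/-- A subgroup `H` of `Isom(𝔼ⁿ)` *splits* if `H = T_H ⋊ H₀`:
the translation part and the spherical part of every element of `H` lie in `H`. -/
def Splits {n : ℕ} (H : Subgroup (IsomE n)) : Prop :=
  ∀ h ∈ H, SemidirectProduct.inl h.left ∈ H ∧ SemidirectProduct.inr h.right ∈ H

/-- The translation vector of an isometry. -/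
def tPart {n : ℕ} (g : IsomE n) : En n := Multiplicative.toAdd g.left

/-- The lattice `L_H = {λ : t^λ ∈ T_H}` of translation vectors of `H`. -/
def latticeLH {n : ℕ} (H : Subgroup (IsomE n)) : Set (En n) :=
  {v | SemidirectProduct.inl (Multiplicative.ofAdd v) ∈ H}

/-- Word length with respect to a generating set `S` (symmetrized). -/
def wordLength {G : Type*} [Group G] (S : Set G) (g : G) : ℕ :=
  sInf {k | ∃ l : List G, (∀ x ∈ l, x ∈ S ∨ x⁻¹ ∈ S) ∧ l.prod = g ∧ l.length = k}

/-- The conjugator length of a pair of elements. -/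
def conjLength {G : Type*} [Group G] (S : Set G) (h h' : G) : ℕ :=
  sInf {m | ∃ k : G, k * h * k⁻¹ = h' ∧ wordLength S k = m}

/-- The conjugator length function. -/
def CLF {G : Type*} [Group G] (S : Set G) (m : ℕ) : ℕ :=
  sSup {l | ∃ h h' : G, IsConj h h' ∧ wordLength S h + wordLength S h' ≤ m ∧
    conjLength S h h' = l}

/-- `g` quasi-dominates `f` via an increasing affine function. -/
def QuasiDom (f g : ℕ → ℕ) : Prop :=
  ∃ C D : ℕ, 0 < C ∧ ∀ m, f m ≤ C * g (C * m + D) + D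

/-- A Coxeter matrix is irreducible if its Coxeter graph is connected: there is no
nontrivial partition of the generators into two mutually commuting subsets. -/
def CoxeterMatrixIrreducible {B : Type*} (M : CoxeterMatrix B) : Prop :=
  ∀ P : Set B, (∀ i ∈ P, ∀ j ∉ P, M i j = 2) → P = ∅ ∨ P = Set.univ

section Aux

open SemidirectProduct Multiplicative

variable {n : ℕ}

lemma IsomAux.tPart_mul (g h : IsomE n) :
    tPart (g * h) = tPart g + g.right (tPart h) := by
  simp [tPart, SemidirectProduct.mul_left, rotAction]

lemma IsomAux.tPart_inl (v : En n) : tPart (inl (ofAdd v) : IsomE n) = v := rfl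

lemma IsomAux.tPart_inr (A : OrthGrp n) : tPart (inr A : IsomE n) = 0 := rfl

lemma IsomAux.right_inl (v : En n) : (inl (ofAdd v) : IsomE n).right = 1 := rfl

lemma IsomAux.right_inr (A : OrthGrp n) : (inr A : IsomE n).right = A := rfl

lemma IsomAux.tPart_one : tPart (1 : IsomE n) = 0 := rfl

lemma IsomAux.inl_tPart (g : IsomE n) : (inl (ofAdd (tPart g)) : IsomE n) = inl g.left := rfl

lemma IsomAux.eq_of (g h : IsomE n) (h1 : tPart g = tPart h) (h2 : g.right = h.right) :
    g = h := by
  have : g.left = h.left := by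
    have := congrArg Multiplicative.ofAdd h1
    simpa [tPart] using this
  cases g; cases h; simp_all [tPart]

lemma IsomAux.tPart_inv (g : IsomE n) : tPart g⁻¹ = -(g.right⁻¹ (tPart g)) := by
  have h1 : tPart (g⁻¹ * g) = 0 := by rw [inv_mul_cancel]; rfl
  rw [IsomAux.tPart_mul] at h1
  have h2 : (g⁻¹).right = g.right⁻¹ := by simp
  rw [h2] at h1
  linear_combination (norm := module) h1

lemma IsomAux.norm_tPart_inv (g : IsomE n) : ‖tPart g⁻¹‖ = ‖tPart g‖ := by
  rw [IsomAux.tPart_inv, norm_neg, LinearIsometryEquiv.norm_map]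

lemma IsomAux.conj_right (k g : IsomE n) :
    (k * g * k⁻¹).right = k.right * g.right * k.right⁻¹ := by simp

lemma IsomAux.conj_tPart (k g : IsomE n) :
    tPart (k * g * k⁻¹) =
      tPart k + k.right (tPart g) - (k.right * g.right * k.right⁻¹) (tPart k) := by
  rw [IsomAux.tPart_mul, IsomAux.tPart_mul, IsomAux.tPart_inv]
  have h2 : (k * g).right = k.right * g.right := by simp
  rw [h2]
  rw [LinearIsometryEquiv.coe_mul, LinearIsometryEquiv.coe_mul, LinearIsometryEquiv.coe_mul]
  simp only [Function.comp_apply, map_neg]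
  abel

end Aux
section WL

variable {G : Type*} [Group G] {S : Set G}

/-- property of being a symmetric word for `g`. -/
def IsWord (S : Set G) (g : G) (l : List G) : Prop :=
  (∀ x ∈ l, x ∈ S ∨ x⁻¹ ∈ S) ∧ l.prod = g

lemma wordLength_le {g : G} {l : List G} (h : IsWord S g l) :
    wordLength S g ≤ l.length := Nat.sInf_le ⟨l, h.1, h.2, rfl⟩

lemma exists_word_of_mem_closure {g : G} (h : g ∈ Subgroup.closure S) :
    ∃ l, IsWord S g l := by
  induction h using Subgroup.closure_induction with
  | mem x hx => exact ⟨[x], fun y hy => by simp_all, by simp⟩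
  | one => exact ⟨[], by simp, by simp⟩
  | mul x y hx hy ihx ihy =>
      obtain ⟨l1, h1, e1⟩ := ihx
      obtain ⟨l2, h2, e2⟩ := ihy
      exact ⟨l1 ++ l2, by
        intro z hz
        rcases List.mem_append.1 hz with h | h
        · exact h1 z h
        · exact h2 z h, by rw [List.prod_append, e1, e2]⟩
  | inv x hx ih =>
      obtain ⟨l, h1, e⟩ := ih
      refine ⟨(l.map (·⁻¹)).reverse, ?_, ?_⟩
      · intro z hz
        simp only [List.mem_reverse, List.mem_map] at hz
        obtain ⟨y, hy, rfl⟩ := hz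
        rcases h1 y hy with h | h
        · exact Or.inr (by simpa using h)
        · exact Or.inl h
      · rw [← e, ← List.prod_inv_reverse]

lemma wordLength_spec {g : G} (hg : ∃ l, IsWord S g l) :
    ∃ l, IsWord S g l ∧ l.length = wordLength S g := by
  have hne : {k | ∃ l : List G, (∀ x ∈ l, x ∈ S ∨ x⁻¹ ∈ S) ∧ l.prod = g ∧ l.length = k}.Nonempty := by
    obtain ⟨l, h1, h2⟩ := hg
    exact ⟨l.length, l, h1, h2, rfl⟩
  obtain ⟨l, h1, h2, h3⟩ := Nat.sInf_mem hne
  exact ⟨l, ⟨h1, h2⟩, h3⟩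

lemma wordLength_one : wordLength S (1 : G) = 0 :=
  Nat.eq_zero_of_le_zero (wordLength_le (l := []) ⟨by simp, by simp⟩)

lemma wordLength_mul_le {g h : G} (hg : ∃ l, IsWord S g l) (hh : ∃ l, IsWord S h l) :
    wordLength S (g * h) ≤ wordLength S g + wordLength S h := by
  obtain ⟨l1, h1, e1⟩ := wordLength_spec hg
  obtain ⟨l2, h2, e2⟩ := wordLength_spec hh
  have : IsWord S (g * h) (l1 ++ l2) := by
    refine ⟨?_, by rw [List.prod_append, h1.2, h2.2]⟩
    intro z hz
    rcases List.mem_append.1 hz with h | h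
    · exact h1.1 z h
    · exact h2.1 z h
  simpa [e1, e2] using wordLength_le this

lemma wordLength_inv_le {g : G} (hg : ∃ l, IsWord S g l) :
    wordLength S g⁻¹ ≤ wordLength S g := by
  obtain ⟨l, hl, e⟩ := wordLength_spec hg
  have : IsWord S g⁻¹ ((l.map (·⁻¹)).reverse) := by
    refine ⟨?_, by rw [← hl.2, ← List.prod_inv_reverse]⟩
    intro z hz
    simp only [List.mem_reverse, List.mem_map] at hz
    obtain ⟨y, hy, rfl⟩ := hz
    rcases hl.1 y hy with h | h
    · exact Or.inr (by simpa using h)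
    · exact Or.inl h
  calc wordLength S g⁻¹ ≤ (l.map (·⁻¹)).reverse.length := wordLength_le this
  _ = l.length := by simp
  _ = wordLength S g := e

lemma wordLength_pow_le (hrep : ∀ g : G, ∃ l, IsWord S g l) (g : G) (N : ℕ) :
    wordLength S (g ^ N) ≤ N * wordLength S g := by
  induction N with
  | zero => simp [wordLength_one]
  | succ N ih =>
      have := wordLength_mul_le (hrep (g ^ N)) (hrep g)
      rw [pow_succ]
      calc wordLength S (g ^ N * g) ≤ wordLength S (g ^ N) + wordLength S g := this
      _ ≤ N * wordLength S g + wordLength S g := by omega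
      _ = (N + 1) * wordLength S g := by ring

lemma wordLength_zpow_le (hrep : ∀ g : G, ∃ l, IsWord S g l) (g : G) (m : ℤ) :
    wordLength S (g ^ m) ≤ m.natAbs * wordLength S g := by
  rcases Int.natAbs_eq m with h | h
  · rw [h, zpow_natCast]; exact wordLength_pow_le hrep g m.natAbs
  · rw [h]
    calc wordLength S (g ^ (-(m.natAbs : ℤ)))
        = wordLength S ((g ^ (m.natAbs : ℤ))⁻¹) := by rw [zpow_neg]
      _ ≤ wordLength S (g ^ (m.natAbs : ℤ)) := wordLength_inv_le (hrep _)
      _ = wordLength S (g ^ m.natAbs) := by rw [zpow_natCast]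
      _ ≤ m.natAbs * wordLength S g := wordLength_pow_le hrep g m.natAbs
      _ = (-(m.natAbs:ℤ)).natAbs * wordLength S g := by rw [Int.natAbs_neg, Int.natAbs_natCast]

lemma wordLength_sum_le (hrep : ∀ g : G, ∃ l, IsWord S g l) {E : Type*} [AddCommGroup E]
    (j : Multiplicative E →* G) {ι : Type*} [DecidableEq ι] (t : Finset ι)
    (m : ι → ℤ) (p : ι → E) :
    wordLength S (j (Multiplicative.ofAdd (∑ i ∈ t, m i • p i))) ≤
      ∑ i ∈ t, (m i).natAbs * wordLength S (j (Multiplicative.ofAdd (p i))) := by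
  induction t using Finset.induction with
  | empty => simp [wordLength_one]
  | insert a t' hx ih =>
      rw [Finset.sum_insert hx, Finset.sum_insert hx, ofAdd_add, map_mul]
      calc wordLength S (j (Multiplicative.ofAdd (m a • p a)) *
              j (Multiplicative.ofAdd (∑ i ∈ t', m i • p i)))
          ≤ wordLength S (j (Multiplicative.ofAdd (m a • p a))) +
              wordLength S (j (Multiplicative.ofAdd (∑ i ∈ t', m i • p i))) :=
            wordLength_mul_le (hrep _) (hrep _)
        _ ≤ (m a).natAbs * wordLength S (j (Multiplicative.ofAdd (p a))) +
              ∑ i ∈ t', (m i).natAbs * wordLength S (j (Multiplicative.ofAdd (p i))) := by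
            have h1 : wordLength S (j (Multiplicative.ofAdd (m a • p a))) ≤
                (m a).natAbs * wordLength S (j (Multiplicative.ofAdd (p a))) := by
              rw [ofAdd_zsmul, map_zpow]
              exact wordLength_zpow_le hrep _ _
            omega

lemma wordLength_eq_zero {g : G} (hg : ∃ l, IsWord S g l) (h : wordLength S g = 0) :
    g = 1 := by
  obtain ⟨l, hl, e⟩ := wordLength_spec hg
  rw [h, List.length_eq_zero_iff] at e
  rw [← hl.2, e, List.prod_nil]

end WL
section Geo

open SemidirectProduct Multiplicative

variable {n : ℕ} {W : Subgroup (IsomE n)}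

/-- Displacement of a word is at most `R` times its length. -/
lemma norm_tPart_prod_le {S : Set ↥W} {R : ℝ}
    (hR : ∀ g ∈ S, ‖tPart (g : IsomE n)‖ ≤ R) :
    ∀ l : List ↥W, (∀ x ∈ l, x ∈ S ∨ x⁻¹ ∈ S) →
      ‖tPart (l.prod : IsomE n)‖ ≤ R * l.length := by
  have hsym : ∀ x : ↥W, x ∈ S ∨ x⁻¹ ∈ S → ‖tPart (x : IsomE n)‖ ≤ R := by
    intro x hx
    rcases hx with h | h
    · exact hR x h
    · have := hR _ h
      rw [show ((x⁻¹ : ↥W) : IsomE n) = (x : IsomE n)⁻¹ by simp] at this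
      rwa [IsomAux.norm_tPart_inv] at this
  intro l
  induction l with
  | nil => intro _; simp [IsomAux.tPart_one]
  | cons a l ih =>
      intro hmem
      have h1 := hsym a (hmem a (by simp))
      have h2 := ih (fun x hx => hmem x (by simp [hx]))
      rw [List.prod_cons]
      have : ((a * l.prod : ↥W) : IsomE n) = (a : IsomE n) * (l.prod : ↥W) := by simp
      rw [this, IsomAux.tPart_mul]
      calc ‖tPart (a : IsomE n) + (a : IsomE n).right (tPart ((l.prod : ↥W) : IsomE n))‖
          ≤ ‖tPart (a : IsomE n)‖ + ‖(a : IsomE n).right (tPart ((l.prod : ↥W) : IsomE n))‖ :=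
            norm_add_le _ _
        _ = ‖tPart (a : IsomE n)‖ + ‖tPart ((l.prod : ↥W) : IsomE n)‖ := by
            rw [LinearIsometryEquiv.norm_map]
        _ ≤ R + R * l.length := by gcongr
        _ = R * (l.length + 1) := by ring
        _ = R * (a :: l).length := by simp

lemma norm_tPart_le_wordLength {S : Set ↥W} {R : ℝ}
    (hR : ∀ g ∈ S, ‖tPart (g : IsomE n)‖ ≤ R) {g : ↥W} (hg : ∃ l, IsWord S g l) :
    ‖tPart (g : IsomE n)‖ ≤ R * wordLength S g := by
  obtain ⟨l, hl, e⟩ := wordLength_spec hg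
  rw [← e, ← hl.2]
  exact norm_tPart_prod_le hR l hl.1

/-- The lattice of `W` as a `ℤ`-submodule of `Eⁿ`. -/
def latZ (W : Subgroup (IsomE n)) : Submodule ℤ (En n) where
  carrier := latticeLH W
  add_mem' := by
    intro a b ha hb
    have : (inl (ofAdd (a + b)) : IsomE n) = inl (ofAdd a) * inl (ofAdd b) := by
      rw [ofAdd_add, map_mul]
    simpa [latticeLH, this] using mul_mem ha hb
  zero_mem' := by
    have : (inl (ofAdd (0 : En n)) : IsomE n) = 1 := by simp
    simp only [latticeLH, Set.mem_setOf_eq, this]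
    exact one_mem W
  smul_mem' := by
    intro m v hv
    have : (inl (ofAdd (m • v)) : IsomE n) = (inl (ofAdd v) : IsomE n) ^ m := by
      rw [ofAdd_zsmul, map_zpow]
    simpa [latticeLH, this] using zpow_mem hv m

lemma latZ_mem_W {v : En n} (hv : v ∈ latZ W) : (inl (ofAdd v) : IsomE n) ∈ W := hv

/-- The lattice is invariant under spherical parts. -/
lemma latZ_inv {A : OrthGrp n} (hA : (inr A : IsomE n) ∈ W) {v : En n}
    (hv : v ∈ latZ W) : A v ∈ latZ W := by
  have h1 : (inl (rotAction n A (ofAdd v)) : IsomE n) ∈ W := by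
    rw [SemidirectProduct.inl_aut]
    refine mul_mem (mul_mem hA hv) ?_
    rw [map_inv]
    exact inv_mem hA
  have h2 : rotAction n A (ofAdd v) = ofAdd (A v) := rfl
  rwa [h2] at h1

/-- `v ↦ inl (ofAdd v)` is continuous. -/
lemma continuous_inl_ofAdd : Continuous (fun v : En n => (inl (ofAdd v) : IsomE n)) := by
  rw [continuous_induced_rng]
  exact Continuous.prodMk (by exact continuous_id) continuous_const

end Geo
section KeyA

open SemidirectProduct Multiplicative Submodule

variable {n : ℕ} {W : Subgroup (IsomE n)}

/-- The translation lattice embeds into `W` as a monoid hom. -/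
def latHom (W : Subgroup (IsomE n)) : Multiplicative ↥(latZ W) →* ↥W where
  toFun x := ⟨inl (ofAdd ((toAdd x : ↥(latZ W)) : En n)), latZ_mem_W (toAdd x : ↥(latZ W)).2⟩
  map_one' := Subtype.ext (by
    show (inl (ofAdd (((0 : ↥(latZ W)) : En n))) : IsomE n) = 1
    simp)
  map_mul' x y := Subtype.ext (by
    show (inl (ofAdd (((toAdd x + toAdd y : ↥(latZ W)) : En n))) : IsomE n) = _
    push_cast
    rw [ofAdd_add, map_mul])

set_option maxHeartbeats 1000000 in
/-- Key lemma: short solutions of `(1 - A) s = (1 - A) s₀` in the lattice. -/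
lemma keyA (hdisc : DiscreteTopology ↥W)
    (hspan : Submodule.span ℝ (latticeLH W) = ⊤)
    (S : Set ↥W) (hrepW : ∀ g : ↥W, ∃ l, IsWord S g l) (A : OrthGrp n) (hA : (inr A : IsomE n) ∈ W) :
    ∃ CA : ℝ, 0 ≤ CA ∧ ∀ s₀ ∈ latZ W, ∃ s ∈ latZ W,
      s - A s = s₀ - A s₀ ∧
      ∀ (hs : (inl (ofAdd s) : IsomE n) ∈ W),
        (wordLength S (⟨inl (ofAdd s), hs⟩ : ↥W) : ℝ) ≤ CA * ‖s₀ - A s₀‖ := by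
  classical
  set f : En n →ₗ[ℝ] En n := LinearMap.id - A.toLinearEquiv.toLinearMap with hfdef
  have hfapp : ∀ x, f x = x - A x := fun x => rfl
  set V : Submodule ℝ (En n) := LinearMap.range f with hV
  set Λ : Submodule ℤ (En n) := Submodule.map (f.restrictScalars ℤ) (latZ W) with hΛ
  have hΛsub : ∀ x ∈ Λ, x ∈ latZ W := by
    rintro x ⟨y, hy, rfl⟩
    exact sub_mem hy (latZ_inv hA hy)
  have hΛV : ∀ x ∈ Λ, x ∈ V := by
    rintro x ⟨y, _, rfl⟩
    exact ⟨y, rfl⟩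
  have hspanΛ : Submodule.span ℝ (Λ : Set (En n)) = V := by
    have h1 : (Λ : Set (En n)) = f '' (latticeLH W) := rfl
    rw [h1, Submodule.span_image, hspan, Submodule.map_top]
  set Λ₂ : Submodule ℤ ↥V := Λ.comap ((V.subtype).restrictScalars ℤ) with hΛ₂
  haveI : DiscreteTopology ↥Λ₂ := by
    refine DiscreteTopology.of_continuous_injective (β := ↥W)
      (f := fun x : ↥Λ₂ =>
        (⟨inl (ofAdd (((x : ↥V) : En n))), latZ_mem_W (hΛsub _ x.2)⟩ : ↥W)) ?_ ?_
    · exact Continuous.subtype_mk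
        (continuous_inl_ofAdd.comp (continuous_subtype_val.comp continuous_subtype_val)) _
    · intro x y hxy
      have h1 : (inl (ofAdd (((x : ↥V) : En n))) : IsomE n)
          = inl (ofAdd (((y : ↥V) : En n))) := congrArg Subtype.val hxy
      have h2 : ((x : ↥V) : En n) = ((y : ↥V) : En n) := by
        have := SemidirectProduct.inl_injective (φ := rotAction n) h1
        exact ofAdd.injective this
      exact Subtype.ext (Subtype.ext h2)
  haveI hzl : IsZLattice ℝ Λ₂ := by
    refine ⟨?_⟩
    apply Submodule.map_injective_of_injective (Submodule.injective_subtype V)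
    have himg : (V.subtype) '' (Λ₂ : Set ↥V) = (Λ : Set (En n)) := by
      ext x
      constructor
      · rintro ⟨y, hy, rfl⟩; exact hy
      · intro hx; exact ⟨⟨x, hΛV x hx⟩, hx, rfl⟩
    rw [Submodule.map_span, himg, hspanΛ, Submodule.map_top, Submodule.range_subtype]
  haveI : Module.Finite ℤ ↥Λ₂ := ZLattice.module_finite ℝ Λ₂
  haveI : Module.Free ℤ ↥Λ₂ := ZLattice.module_free ℝ Λ₂
  set b := Module.Free.chooseBasis ℤ ↥Λ₂ with hb
  set bR := b.ofZLatticeBasis ℝ Λ₂ with hbR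
  set eL : ↥V →L[ℝ] (Module.Free.ChooseBasisIndex ℤ ↥Λ₂ → ℝ) :=
    LinearMap.toContinuousLinearMap (bR.equivFun.toLinearMap) with heL
  have hp : ∀ i, ∃ q, q ∈ latZ W ∧ f q = ((b i : ↥V) : En n) := by
    intro i
    obtain ⟨q, hq1, hq2⟩ := Submodule.mem_map.mp (Submodule.mem_comap.mp (b i).2)
    exact ⟨q, hq1, hq2⟩
  choose p hpL hpf using hp
  set M₁ : ℕ := Finset.univ.sup
    (fun i => wordLength S ((latHom W) (ofAdd (⟨p i, hpL i⟩ : ↥(latZ W))))) with hM₁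
  refine ⟨(Fintype.card (Module.Free.ChooseBasisIndex ℤ ↥Λ₂) : ℝ) * (‖eL‖ * M₁), by positivity, ?_⟩
  intro s₀ hs₀
  set c := s₀ - A s₀ with hc
  have hcΛ : c ∈ Λ := ⟨s₀, hs₀, rfl⟩
  have hcV : c ∈ V := hΛV c hcΛ
  set c₂ : ↥Λ₂ := ⟨⟨c, hcV⟩, hcΛ⟩ with hc₂
  set m : Module.Free.ChooseBasisIndex ℤ ↥Λ₂ → ℤ := fun i => b.repr c₂ i with hm
  have hmb : ∀ i, |(m i : ℝ)| ≤ ‖eL‖ * ‖c‖ := by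
    intro i
    have h1 : (m i : ℝ) = bR.repr (⟨c, hcV⟩ : ↥V) i := by
      rw [hm]
      exact (b.ofZLatticeBasis_repr_apply ℝ Λ₂ c₂ i).symm
    have h2 : bR.repr (⟨c, hcV⟩ : ↥V) i = eL (⟨c, hcV⟩ : ↥V) i := by
      rw [heL]
      simp [Module.Basis.equivFun_apply]
    rw [h1, h2]
    calc |eL (⟨c, hcV⟩ : ↥V) i| = ‖eL (⟨c, hcV⟩ : ↥V) i‖ := (Real.norm_eq_abs _).symm
      _ ≤ ‖eL (⟨c, hcV⟩ : ↥V)‖ := norm_le_pi_norm _ i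
      _ ≤ ‖eL‖ * ‖(⟨c, hcV⟩ : ↥V)‖ := eL.le_opNorm _
      _ = ‖eL‖ * ‖c‖ := rfl
  set s : En n := ∑ i, m i • p i with hs
  have hsmem : s ∈ latZ W := Submodule.sum_mem _ (fun i _ => Submodule.smul_mem _ _ (hpL i))
  have h4 : c = ∑ i, m i • ((b i : ↥V) : En n) := by
    set g₂ : ↥Λ₂ →ₗ[ℤ] En n := ((V.subtype).restrictScalars ℤ).comp Λ₂.subtype with hg₂
    have h3 : c₂ = ∑ i, m i • b i := by
      rw [hm]
      exact (b.sum_repr c₂).symm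
    have h3' : g₂ c₂ = ∑ i, m i • g₂ (b i) := by
      rw [h3, map_sum]
      exact Finset.sum_congr rfl fun i _ => map_zsmul g₂ (m i) (b i)
    exact h3'
  have hfs : f s = c := by
    have : f s = ∑ i, m i • f (p i) := by
      rw [hs, map_sum]
      exact Finset.sum_congr rfl fun i _ => map_zsmul f (m i) (p i)
    rw [this, h4]
    exact Finset.sum_congr rfl fun i _ => by rw [hpf]
  refine ⟨s, hsmem, by rw [← hfs]; rfl, ?_⟩
  intro hmem
  have hkey : (⟨inl (ofAdd s), hmem⟩ : ↥W)
      = (latHom W) (ofAdd (∑ i, m i • (⟨p i, hpL i⟩ : ↥(latZ W)))) := by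
    apply Subtype.ext
    show (inl (ofAdd s) : IsomE n) = inl (ofAdd (((∑ i, m i • (⟨p i, hpL i⟩ : ↥(latZ W)) : ↥(latZ W)) : En n)))
    congr 1
    rw [hs]
    push_cast
    rfl
  rw [hkey]
  have h5 := wordLength_sum_le (S := S) (hrep := ?hrp) (latHom W) Finset.univ m
    (fun i => (⟨p i, hpL i⟩ : ↥(latZ W)))
  case hrp => exact fun g => hrepW g
  calc (wordLength S ((latHom W) (ofAdd (∑ i, m i • (⟨p i, hpL i⟩ : ↥(latZ W))))) : ℝ)
      ≤ (∑ i, (m i).natAbs * wordLength S ((latHom W) (ofAdd (⟨p i, hpL i⟩ : ↥(latZ W)))) : ℕ) := by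
        exact_mod_cast h5
    _ ≤ ∑ i, (|(m i : ℝ)|) * M₁ := by
        rw [Nat.cast_sum]
        refine Finset.sum_le_sum fun i _ => ?_
        rw [Nat.cast_mul]
        have e1 : ((m i).natAbs : ℝ) = |(m i : ℝ)| := by
          rw [Nat.cast_natAbs]; push_cast; ring
        rw [e1]
        have e2n : wordLength S ((latHom W) (ofAdd (⟨p i, hpL i⟩ : ↥(latZ W)))) ≤ M₁ := by
          rw [hM₁]
          exact Finset.le_sup (f := fun j => wordLength S
            ((latHom W) (ofAdd (⟨p j, hpL j⟩ : ↥(latZ W))))) (Finset.mem_univ i)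
        have e2 : (wordLength S ((latHom W) (ofAdd (⟨p i, hpL i⟩ : ↥(latZ W)))) : ℝ) ≤ (M₁ : ℝ) :=
          Nat.cast_le.mpr e2n
        exact mul_le_mul_of_nonneg_left e2 (abs_nonneg _)
    _ ≤ ∑ _i : Module.Free.ChooseBasisIndex ℤ ↥Λ₂, (‖eL‖ * ‖c‖) * M₁ := by
        refine Finset.sum_le_sum fun i _ => ?_
        exact mul_le_mul_of_nonneg_right (hmb i) (Nat.cast_nonneg _)
    _ = (Fintype.card (Module.Free.ChooseBasisIndex ℤ ↥Λ₂) : ℝ) * (‖eL‖ * M₁) * ‖c‖ := by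
        rw [Finset.sum_const, Finset.card_univ, nsmul_eq_mul]
        ring

end KeyA
section Upper

open SemidirectProduct Multiplicative

variable {n : ℕ} {W : Subgroup (IsomE n)}

lemma right_mem_sph {g : IsomE n} (hg : g ∈ sphSubgroup n) : inr g.right = g := by
  obtain ⟨A, rfl⟩ := hg
  rfl

set_option maxHeartbeats 1000000 in
/-- Main upper bound: conjugate elements admit short conjugators. -/
lemma upperBound (hsplit : Splits W)
    (hdisc : DiscreteTopology ↥W)
    (hspan : Submodule.span ℝ (latticeLH W) = ⊤)
    (hW0fin : ((W ⊓ sphSubgroup n : Subgroup (IsomE n)) : Set (IsomE n)).Finite)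
    (S : Set ↥W) (hrepW : ∀ g : ↥W, ∃ l, IsWord S g l)
    {R : ℝ} (hR : ∀ g ∈ S, ‖tPart (g : IsomE n)‖ ≤ R) :
    ∃ C D : ℕ, ∀ h h' : ↥W, IsConj h h' →
      ∃ k : ↥W, k * h * k⁻¹ = h' ∧
        wordLength S k ≤ C * (wordLength S h + wordLength S h') + D := by
  classical
  -- word-length bound for spherical elements
  set T : Finset (IsomE n) := hW0fin.toFinset with hT
  set D₀ : ℕ := T.sup (fun g => if hg : g ∈ W then wordLength S ⟨g, hg⟩ else 0) with hD₀
  have hD₀le : ∀ (g : IsomE n) (hg : g ∈ W), g ∈ sphSubgroup n →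
      wordLength S ⟨g, hg⟩ ≤ D₀ := by
    intro g hg hgs
    have hmemT : g ∈ T := hW0fin.mem_toFinset.mpr ⟨hg, hgs⟩
    have := Finset.le_sup (f := fun g => if hg : g ∈ W then wordLength S ⟨g, hg⟩ else 0) hmemT
    rwa [dif_pos hg] at this
  -- constants from keyA, summed over the finite set of spherical parts
  have hCA : ∀ A : OrthGrp n, ∃ CA : ℝ, 0 ≤ CA ∧ ((inr A : IsomE n) ∈ W → ∀ s₀ ∈ latZ W,
      ∃ s ∈ latZ W, s - A s = s₀ - A s₀ ∧
      ∀ (hs : (inl (ofAdd s) : IsomE n) ∈ W),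
        (wordLength S (⟨inl (ofAdd s), hs⟩ : ↥W) : ℝ) ≤ CA * ‖s₀ - A s₀‖) := by
    intro A
    by_cases hA : (inr A : IsomE n) ∈ W
    · obtain ⟨CA, h0, hP⟩ := keyA hdisc hspan S hrepW A hA
      exact ⟨CA, h0, fun _ => hP⟩
    · exact ⟨0, le_refl 0, fun h => absurd h hA⟩
  choose CAf hCA0 hCAP using hCA
  set 𝒜 : Finset (OrthGrp n) := T.image (fun g => g.right) with h𝒜
  set Creal : ℝ := ∑ A ∈ 𝒜, CAf A with hCreal
  have hCrle : ∀ A ∈ 𝒜, CAf A ≤ Creal := by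
    intro A hA
    exact Finset.single_le_sum (fun B _ => hCA0 B) hA
  have hCr0 : 0 ≤ Creal := Finset.sum_nonneg (fun B _ => hCA0 B)
  refine ⟨⌈Creal * R⌉₊, D₀, ?_⟩
  intro h h' hconj
  obtain ⟨k₀, hk₀⟩ := isConj_iff.mp hconj
  -- pass to the isometry group
  have hconjE : (k₀ : IsomE n) * (h : IsomE n) * (k₀ : IsomE n)⁻¹ = (h' : IsomE n) := by
    exact_mod_cast congrArg (fun x : ↥W => (x : IsomE n)) hk₀
  set A : OrthGrp n := (h' : IsomE n).right with hA
  set w : OrthGrp n := (k₀ : IsomE n).right with hw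
  have hAW : (inr A : IsomE n) ∈ W := (hsplit _ h'.2).2
  have hA𝒜 : A ∈ 𝒜 := by
    rw [h𝒜]
    refine Finset.mem_image.mpr ⟨inr A, ?_, rfl⟩
    exact hW0fin.mem_toFinset.mpr ⟨hAW, ⟨A, rfl⟩⟩
  have hwW : (inr w : IsomE n) ∈ W := (hsplit _ k₀.2).2
  have hr : w * (h : IsomE n).right * w⁻¹ = A := by
    rw [hA, ← hconjE, IsomAux.conj_right]
  set s₀ : En n := tPart (k₀ : IsomE n) with hs₀def
  have hs₀ : s₀ ∈ latZ W := by
    show (inl (ofAdd s₀) : IsomE n) ∈ W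
    rw [hs₀def, IsomAux.inl_tPart]
    exact (hsplit _ k₀.2).1
  have ht : s₀ + w (tPart (h : IsomE n)) - A s₀ = tPart (h' : IsomE n) := by
    have := IsomAux.conj_tPart (k₀ : IsomE n) (h : IsomE n)
    rw [hconjE, ← hw, hr] at this
    rw [this]
  obtain ⟨s, hsmem, heq, hwl⟩ := hCAP A hAW s₀ hs₀
  -- the short conjugator
  set kE : IsomE n := inl (ofAdd s) * inr w with hkE
  have hkW : kE ∈ W := mul_mem (latZ_mem_W hsmem) hwW
  set k : ↥W := ⟨kE, hkW⟩ with hk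
  have hkright : kE.right = w := by
    rw [hkE, SemidirectProduct.mul_right, IsomAux.right_inl, IsomAux.right_inr, one_mul]
  have hktPart : tPart kE = s := by
    rw [hkE, IsomAux.tPart_mul, IsomAux.right_inl, IsomAux.tPart_inl, IsomAux.tPart_inr]
    simp
  refine ⟨k, ?_, ?_⟩
  · -- k conjugates h to h'
    apply Subtype.ext
    have hcoe : ((k * h * k⁻¹ : ↥W) : IsomE n) = kE * (h : IsomE n) * kE⁻¹ := by
      push_cast [hk]
      rfl
    rw [hcoe]
    apply IsomAux.eq_of
    · rw [IsomAux.conj_tPart, hktPart, hkright, hr, ← ht]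
      linear_combination (norm := module) heq
    · rw [IsomAux.conj_right, hkright, hr, hA]
  · -- the word length bound
    have hksplit : k = (⟨inl (ofAdd s), latZ_mem_W hsmem⟩ : ↥W) * (⟨inr w, hwW⟩ : ↥W) := by
      apply Subtype.ext
      push_cast [hk, hkE]
      rfl
    have h1 : wordLength S k ≤
        wordLength S (⟨inl (ofAdd s), latZ_mem_W hsmem⟩ : ↥W) + wordLength S (⟨inr w, hwW⟩ : ↥W) := by
      rw [hksplit]
      exact wordLength_mul_le (hrepW _) (hrepW _)
    have h2 : wordLength S (⟨inr w, hwW⟩ : ↥W) ≤ D₀ := hD₀le _ hwW ⟨w, rfl⟩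
    have h3 : (wordLength S (⟨inl (ofAdd s), latZ_mem_W hsmem⟩ : ↥W) : ℝ) ≤ CAf A * ‖s₀ - A s₀‖ :=
      hwl _
    -- bound the norm
    have hnorm : ‖s₀ - A s₀‖ ≤ R * wordLength S h + R * wordLength S h' := by
      have e1 : s₀ - A s₀ = tPart (h' : IsomE n) - w (tPart (h : IsomE n)) := by
        rw [← ht]; abel
      rw [e1]
      calc ‖tPart (h' : IsomE n) - w (tPart (h : IsomE n))‖
          ≤ ‖tPart (h' : IsomE n)‖ + ‖w (tPart (h : IsomE n))‖ := norm_sub_le _ _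
        _ = ‖tPart (h' : IsomE n)‖ + ‖tPart (h : IsomE n)‖ := by
            rw [LinearIsometryEquiv.norm_map]
        _ ≤ R * wordLength S h' + R * wordLength S h := by
            gcongr <;> [exact norm_tPart_le_wordLength hR (hrepW h');
              exact norm_tPart_le_wordLength hR (hrepW h)]
        _ = R * wordLength S h + R * wordLength S h' := by ring
    have hfinal : (wordLength S k : ℝ) ≤
        (⌈Creal * R⌉₊ : ℝ) * (wordLength S h + wordLength S h') + D₀ := by
      have hX0 : (0:ℝ) ≤ R * wordLength S h + R * wordLength S h' :=
        le_trans (norm_nonneg _) hnorm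
      calc (wordLength S k : ℝ)
          ≤ (wordLength S (⟨inl (ofAdd s), latZ_mem_W hsmem⟩ : ↥W) : ℝ) +
              (wordLength S (⟨inr w, hwW⟩ : ↥W) : ℝ) := by exact_mod_cast h1
        _ ≤ CAf A * ‖s₀ - A s₀‖ + D₀ :=
            add_le_add h3 (by exact_mod_cast h2)
        _ ≤ CAf A * (R * wordLength S h + R * wordLength S h') + D₀ :=
            add_le_add_left (mul_le_mul_of_nonneg_left hnorm (hCA0 A)) _
        _ ≤ Creal * (R * wordLength S h + R * wordLength S h') + D₀ :=
            add_le_add_left (mul_le_mul_of_nonneg_right (hCrle A hA𝒜) hX0) _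
        _ = (Creal * R) * ((wordLength S h : ℝ) + wordLength S h') + D₀ := by ring
        _ ≤ (⌈Creal * R⌉₊ : ℝ) * ((wordLength S h : ℝ) + wordLength S h') + D₀ :=
            add_le_add_left (mul_le_mul_of_nonneg_right (Nat.le_ceil (Creal * R)) (by positivity)) _
    exact_mod_cast hfinal

end Upper
section Lower

open SemidirectProduct Multiplicative

variable {n : ℕ} {W : Subgroup (IsomE n)}

lemma nat_sSup_le {s : Set ℕ} {b : ℕ} (h : ∀ a ∈ s, a ≤ b) : sSup s ≤ b := by
  rcases s.eq_empty_or_nonempty with rfl | hne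
  · rw [csSup_empty]; exact Nat.zero_le b
  · exact csSup_le hne h

lemma nat_le_sSup {s : Set ℕ} {a b : ℕ} (hb : ∀ x ∈ s, x ≤ b) (ha : a ∈ s) : a ≤ sSup s :=
  le_csSup ⟨b, fun _ hx => hb _ hx⟩ ha

set_option maxHeartbeats 1000000 in
/-- Main lower bound: a family of pairs of conjugate elements with linearly growing
conjugator length. -/
lemma lowerBound (hsplit : Splits W)
    (S : Set ↥W) (hrepW : ∀ g : ↥W, ∃ l, IsWord S g l)
    {R : ℝ} (hR : ∀ g ∈ S, ‖tPart (g : IsomE n)‖ ≤ R)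
    (A : OrthGrp n) (hAW : (inr A : IsomE n) ∈ W)
    (v : En n) (hv : v ∈ latZ W) (hAv : A v ≠ v) :
    ∃ a c : ℕ, ∀ N : ℕ, ∃ h h' : ↥W, IsConj h h' ∧
      wordLength S h + wordLength S h' ≤ a * N + a ∧
      ∀ k : ↥W, k * h * k⁻¹ = h' → N ≤ c * wordLength S k := by
  classical
  set u₀ : En n := v - A v with hu₀
  have hu₀mem : u₀ ∈ latZ W := sub_mem hv (latZ_inv hAW hv)
  set δ : ℝ := ‖u₀‖ with hδdef
  have hδ : 0 < δ := by
    rw [hδdef, norm_pos_iff]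
    intro h0
    exact hAv (sub_eq_zero.mp h0).symm
  set E₀ : ↥W := ⟨inl (ofAdd u₀), latZ_mem_W hu₀mem⟩ with hE₀
  set a₀ : ℕ := wordLength S E₀ with ha₀
  set hel : ↥W := ⟨inr A, hAW⟩ with hhel
  set d₀ : ℕ := wordLength S hel with hd₀
  refine ⟨a₀ + 2 * d₀ + 1, ⌈2 * R / δ⌉₊, ?_⟩
  intro N
  have hvN : (N • v : En n) ∈ latZ W := by
    have := (latZ W).smul_mem (N : ℤ) hv
    rwa [natCast_zsmul] at this
  have huN : (N • u₀ : En n) ∈ latZ W := by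
    have := (latZ W).smul_mem (N : ℤ) hu₀mem
    rwa [natCast_zsmul] at this
  have hAsmul : A (N • v) = N • A v := by
    rw [← Nat.cast_smul_eq_nsmul ℝ, map_smul, Nat.cast_smul_eq_nsmul ℝ]
  have hNsmul : N • v - A (N • v) = N • u₀ := by
    rw [hAsmul, hu₀, smul_sub]
  set h'E : IsomE n := inl (ofAdd (N • u₀)) * inr A with hh'E
  have hh'W : h'E ∈ W := mul_mem (latZ_mem_W huN) hAW
  set h' : ↥W := ⟨h'E, hh'W⟩ with hh'
  have hh'right : h'E.right = A := by
    rw [hh'E, SemidirectProduct.mul_right, IsomAux.right_inl, IsomAux.right_inr, one_mul]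
  have hh'tPart : tPart h'E = N • u₀ := by
    rw [hh'E, IsomAux.tPart_mul, IsomAux.right_inl, IsomAux.tPart_inl, IsomAux.tPart_inr]
    simp
  set k₀ : ↥W := ⟨inl (ofAdd (N • v)), latZ_mem_W hvN⟩ with hk₀
  have hconj : IsConj hel h' := by
    rw [isConj_iff]
    refine ⟨k₀, Subtype.ext ?_⟩
    have hcoe : ((k₀ * hel * k₀⁻¹ : ↥W) : IsomE n)
        = (inl (ofAdd (N • v)) : IsomE n) * inr A * (inl (ofAdd (N • v)) : IsomE n)⁻¹ := by
      push_cast [hk₀, hhel]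
      rfl
    rw [hcoe]
    apply IsomAux.eq_of
    · rw [IsomAux.conj_tPart, IsomAux.right_inl, IsomAux.right_inr, IsomAux.tPart_inl,
        IsomAux.tPart_inr, hh'tPart, ← hNsmul]
      simp
    · rw [IsomAux.conj_right, IsomAux.right_inl, IsomAux.right_inr, hh'right]
      group
  have hlen : wordLength S hel + wordLength S h' ≤
      (a₀ + 2 * d₀ + 1) * N + (a₀ + 2 * d₀ + 1) := by
    have hsplith : h' = E₀ ^ N * hel := by
      apply Subtype.ext
      push_cast [hh', hh'E, hE₀, hhel]
      congr 1
      rw [ofAdd_nsmul, map_pow]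
    have h1 : wordLength S h' ≤ N * a₀ + d₀ := by
      rw [hsplith]
      calc wordLength S (E₀ ^ N * hel)
          ≤ wordLength S (E₀ ^ N) + d₀ := wordLength_mul_le (hrepW _) (hrepW _)
        _ ≤ N * a₀ + d₀ := by
            have h0 := wordLength_pow_le hrepW E₀ N
            rw [← ha₀] at h0
            omega
    have h3 : N * a₀ ≤ N * (a₀ + 2 * d₀ + 1) := Nat.mul_le_mul_left N (by omega)
    have h4 : (a₀ + 2 * d₀ + 1) * N = N * (a₀ + 2 * d₀ + 1) := Nat.mul_comm _ _
    omega
  refine ⟨hel, h', hconj, hlen, ?_⟩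
  intro k hk
  have hkE : (k : IsomE n) * inr A * (k : IsomE n)⁻¹ = h'E := by
    have := congrArg (fun x : ↥W => (x : IsomE n)) hk
    push_cast [hhel, hh'] at this
    exact this
  have h6 : (k : IsomE n).right * A * (k : IsomE n).right⁻¹ = A := by
    have := IsomAux.conj_right (k : IsomE n) (inr A)
    rw [hkE, hh'right, IsomAux.right_inr] at this
    exact this.symm
  have ht : tPart (k : IsomE n) - A (tPart (k : IsomE n)) = N • u₀ := by
    have h5 := IsomAux.conj_tPart (k : IsomE n) (inr A)
    rw [hkE, hh'tPart, IsomAux.right_inr, IsomAux.tPart_inr, h6] at h5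
    rw [h5]
    simp
  have hnorm1 : (N : ℝ) * δ ≤ 2 * ‖tPart (k : IsomE n)‖ := by
    have e1 : ‖(N • u₀ : En n)‖ = (N : ℝ) * δ := by
      rw [← Nat.cast_smul_eq_nsmul ℝ, norm_smul]
      simp [hδdef]
    rw [← e1, ← ht]
    calc ‖tPart (k : IsomE n) - A (tPart (k : IsomE n))‖
        ≤ ‖tPart (k : IsomE n)‖ + ‖A (tPart (k : IsomE n))‖ := norm_sub_le _ _
      _ = 2 * ‖tPart (k : IsomE n)‖ := by rw [LinearIsometryEquiv.norm_map]; ring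
  have hnorm2 : ‖tPart (k : IsomE n)‖ ≤ R * wordLength S k :=
    norm_tPart_le_wordLength hR (hrepW k)
  have hfin : (N : ℝ) ≤ (⌈2 * R / δ⌉₊ : ℝ) * wordLength S k := by
    have h7 : (N : ℝ) ≤ (2 * R / δ) * wordLength S k := by
      rw [div_mul_eq_mul_div, le_div_iff₀ hδ]
      calc (N : ℝ) * δ ≤ 2 * ‖tPart (k : IsomE n)‖ := hnorm1
        _ ≤ 2 * (R * wordLength S k) := by linarith
        _ = 2 * R * wordLength S k := by ring
    exact le_trans h7 (mul_le_mul_of_nonneg_right (Nat.le_ceil _) (Nat.cast_nonneg _))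
  exact_mod_cast hfin

end Lower

set_option maxHeartbeats 1000000 in
/-- **The conjugator length function of every affine (irreducible) Coxeter group, with
respect to its standard generating set, grows linearly.**
An affine Coxeter group is realized as an infinite discrete split subgroup
`W = T_W ⋊ W₀` of `Isom(𝔼ⁿ)`, where the translation lattice spans `𝔼ⁿ` (translations by
the coroot lattice) and the spherical part `W₀` is finite, together with an (irreducible)
Coxeter system whose simple reflections form the standard generating set.  "Grows
linearly" means the function is bounded above and below by increasing affine functions,
up to quasi-equivalence. -/
theorem conjugator_length_of_affine_coxeter_linear (n : ℕ)
    (W : Subgroup (IsomE n)) (hsplit : Splits W)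
    (hdisc : DiscreteTopology ↥W) (hinf : Infinite ↥W)
    (hspan : Submodule.span ℝ (latticeLH W) = ⊤)
    (hW0fin : ((W ⊓ sphSubgroup n : Subgroup (IsomE n)) : Set (IsomE n)).Finite)
    (B : Type) (hBfin : Finite B) (M : CoxeterMatrix B)
    (hirr : CoxeterMatrixIrreducible M)
    (cs : CoxeterSystem M ↥W) :
    QuasiDom (CLF (Set.range cs.simple)) (fun m => m) ∧
      QuasiDom (fun m => m) (CLF (Set.range cs.simple)) := by
  classical
  set S : Set ↥W := Set.range cs.simple with hSdef
  have hclos : Subgroup.closure S = ⊤ := cs.subgroup_closure_range_simple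
  have hrepW : ∀ g : ↥W, ∃ l, IsWord S g l := fun g =>
    exists_word_of_mem_closure (by rw [hclos]; trivial)
  haveI : Finite B := hBfin
  have hSfin : S.Finite := Set.finite_range _
  set R : ℝ := ∑ g ∈ hSfin.toFinset, ‖tPart (g : IsomE n)‖ with hRdef
  have hR : ∀ g ∈ S, ‖tPart (g : IsomE n)‖ ≤ R := by
    intro g hg
    rw [hRdef]
    exact Finset.single_le_sum (f := fun x : ↥W => ‖tPart (x : IsomE n)‖)
      (fun _ _ => norm_nonneg _) (hSfin.mem_toFinset.mpr hg)
  obtain ⟨C, D, hCD⟩ := upperBound hsplit hdisc hspan hW0fin S hrepW hR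
  have hset_le : ∀ m : ℕ, ∀ l ∈ {l | ∃ h h' : ↥W, IsConj h h' ∧
      wordLength S h + wordLength S h' ≤ m ∧ conjLength S h h' = l}, l ≤ C * m + D := by
    intro m l hl
    obtain ⟨h, h', hc, hlen, rfl⟩ := hl
    obtain ⟨k, hk, hwl⟩ := hCD h h' hc
    have h1 : conjLength S h h' ≤ wordLength S k := Nat.sInf_le ⟨k, hk, rfl⟩
    have h2 : C * (wordLength S h + wordLength S h') ≤ C * m := Nat.mul_le_mul_left C hlen
    omega
  have hCLF_le : ∀ m, CLF S m ≤ C * m + D := fun m => nat_sSup_le (hset_le m)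
  have hmono : ∀ m m' : ℕ, m ≤ m' → CLF S m ≤ CLF S m' := by
    intro m m' hmm
    apply nat_sSup_le
    intro l hl
    refine nat_le_sSup (hset_le m') ?_
    obtain ⟨h, h', hc, hlen, rfl⟩ := hl
    exact ⟨h, h', hc, le_trans hlen hmm, rfl⟩
  constructor
  · refine ⟨C + 1, D, Nat.succ_pos C, fun m => ?_⟩
    have h1 := hCLF_le m
    have h2 : C * m + D ≤ (C + 1) * ((C + 1) * m + D) + D := by
      have h3 : C * m ≤ (C + 1) * m := Nat.mul_le_mul_right m (Nat.le_succ C)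
      have h5 : m ≤ (C + 1) * m := Nat.le_mul_of_pos_left m (Nat.succ_pos C)
      have h4 : (C + 1) * m ≤ (C + 1) * ((C + 1) * m + D) :=
        Nat.mul_le_mul_left (C + 1) (by omega)
      omega
    exact le_trans h1 h2
  · -- the lower bound
    have hBne : Nonempty B := by
      by_contra hB
      haveI : IsEmpty B := not_nonempty_iff.mp hB
      have hSempty : S = ∅ := by rw [hSdef]; exact Set.range_eq_empty _
      have hbot : (⊤ : Subgroup ↥W) = ⊥ := by
        rw [← hclos, hSempty, Subgroup.closure_empty]
      obtain ⟨x, y, hxy⟩ := (inferInstance : Nontrivial ↥W)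
      apply hxy
      have hx : x ∈ (⊥ : Subgroup ↥W) := hbot ▸ Subgroup.mem_top x
      have hy : y ∈ (⊥ : Subgroup ↥W) := hbot ▸ Subgroup.mem_top y
      rw [Subgroup.mem_bot] at hx hy
      rw [hx, hy]
    obtain ⟨i⟩ := hBne
    set σ : ↥W := cs.simple i with hσ
    have hσne : σ ≠ 1 := by
      intro h
      have h1 := cs.length_simple i
      rw [← hσ, h, cs.length_one] at h1
      omega
    set A : OrthGrp n := (σ : IsomE n).right with hAdef
    have hAW : (SemidirectProduct.inr A : IsomE n) ∈ W := (hsplit _ σ.2).2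
    have hAne : A ≠ 1 := by
      intro hA1
      apply hσne
      have hcoe2 : (σ : IsomE n) * (σ : IsomE n) = 1 := by
        have h0 := congrArg (fun x : ↥W => (x : IsomE n)) (cs.simple_mul_simple_self i)
        push_cast at h0
        rw [← hσ] at h0
        exact h0
      have ht2 := congrArg tPart hcoe2
      rw [IsomAux.tPart_mul, ← hAdef, hA1, IsomAux.tPart_one] at ht2
      have ht2' : tPart (σ : IsomE n) + tPart (σ : IsomE n) = 0 := by
        simpa using ht2
      have ht3 : tPart (σ : IsomE n) = 0 := by
        have h2s : (2 : ℝ) • tPart (σ : IsomE n) = 0 := by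
          rw [two_smul]; exact ht2'
        rcases smul_eq_zero.mp h2s with h | h
        · norm_num at h
        · exact h
      apply Subtype.ext
      apply IsomAux.eq_of
      · rw [ht3]; rfl
      · rw [← hAdef, hA1]; rfl
    have hvex : ∃ v ∈ latZ W, A v ≠ v := by
      by_contra hvv
      push_neg at hvv
      apply hAne
      have hlin : (A.toLinearEquiv : En n →ₗ[ℝ] En n) = LinearMap.id := by
        apply LinearMap.ext_on hspan
        intro x hx
        exact hvv x hx
      apply LinearIsometryEquiv.ext
      intro x
      have := congrArg (fun f : En n →ₗ[ℝ] En n => f x) hlin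
      simpa using this
    obtain ⟨v, hv, hAv⟩ := hvex
    obtain ⟨a, c, hlow⟩ := lowerBound hsplit S hrepW hR A hAW v hv hAv
    refine ⟨a + c + 1, a, by omega, fun m => ?_⟩
    obtain ⟨h, h', hconj, hlen, hcb⟩ := hlow m
    have hne : {mm | ∃ k : ↥W, k * h * k⁻¹ = h' ∧ wordLength S k = mm}.Nonempty := by
      obtain ⟨k0, hk0⟩ := isConj_iff.mp hconj
      exact ⟨wordLength S k0, k0, hk0, rfl⟩
    obtain ⟨k, hk, hwlk⟩ := Nat.sInf_mem hne
    have h1 : m ≤ c * conjLength S h h' := by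
      have h0 := hcb k hk
      rw [hwlk] at h0
      exact h0
    have h2 : conjLength S h h' ≤ CLF S (a * m + a) :=
      nat_le_sSup (hset_le (a * m + a)) ⟨h, h', hconj, hlen, rfl⟩
    have h3 : CLF S (a * m + a) ≤ CLF S ((a + c + 1) * m + a) := by
      apply hmono
      have : a * m ≤ (a + c + 1) * m := Nat.mul_le_mul_right m (by omega)
      omega
    calc m ≤ c * conjLength S h h' := h1
      _ ≤ c * CLF S ((a + c + 1) * m + a) := Nat.mul_le_mul_left c (le_trans h2 h3)
      _ ≤ (a + c + 1) * CLF S ((a + c + 1) * m + a) + a := by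
          have := Nat.mul_le_mul_right (CLF S ((a + c + 1) * m + a))
            (show c ≤ a + c + 1 by omega)
          omega
end
end

section
/- Let H be a split, locally compact subgroup of G = T ⋊ O(n) = Isom(𝔼ⁿ). Then H is compactly generated, i.e. H = ⟨S⟩ for some compact subset S ⊆ H. -/
open Topology


noncomputable section

section OrthTop
variable {n : ℕ}

lemma orth_inducing : Topology.IsInducing (fun A : OrthGrp n => (A : En n → En n)) := ⟨rfl⟩

lemma orth_coe_injective : Function.Injective (fun A : OrthGrp n => (A : En n → En n)) := by
  intro A B h
  exact DFunLike.coe_injective h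

lemma orth_continuous_coe : Continuous (fun A : OrthGrp n => (A : En n → En n)) :=
  continuous_induced_dom

lemma orth_continuous_eval (x : En n) : Continuous (fun A : OrthGrp n => A x) :=
  (continuous_apply x).comp orth_continuous_coe

instance : T2Space (OrthGrp n) :=
  Topology.IsEmbedding.t2Space ⟨orth_inducing, orth_coe_injective⟩

/-- joint continuity of evaluation -/
lemma orth_continuous_eval₂ : Continuous (fun p : OrthGrp n × En n => p.1 p.2) := by
  rw [continuous_iff_continuousAt]
  rintro ⟨A₀, v₀⟩
  apply tendsto_iff_dist_tendsto_zero.mpr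
  have hbound : ∀ p : OrthGrp n × En n,
      dist (p.1 p.2) (A₀ v₀) ≤ dist p.2 v₀ + dist (p.1 v₀) (A₀ v₀) := by
    intro p
    calc dist (p.1 p.2) (A₀ v₀) ≤ dist (p.1 p.2) (p.1 v₀) + dist (p.1 v₀) (A₀ v₀) :=
          dist_triangle _ _ _
      _ = dist p.2 v₀ + dist (p.1 v₀) (A₀ v₀) := by rw [p.1.dist_map]
  have hcont : Continuous (fun p : OrthGrp n × En n => dist p.2 v₀ + dist (p.1 v₀) (A₀ v₀)) := by
    exact ((continuous_snd.dist continuous_const)).add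
      (((orth_continuous_eval v₀).comp continuous_fst).dist continuous_const)
  have h0 : Filter.Tendsto (fun p : OrthGrp n × En n => dist p.2 v₀ + dist (p.1 v₀) (A₀ v₀))
      (𝓝 (A₀, v₀)) (𝓝 0) := by
    have := hcont.tendsto (A₀, v₀)
    simpa using this
  exact squeeze_zero (fun _ => dist_nonneg) hbound h0

instance : IsTopologicalGroup (OrthGrp n) := by
  refine { continuous_mul := ?_, continuous_inv := ?_ }
  · -- mul
    apply continuous_induced_rng.mpr
    apply continuous_pi
    intro x
    have : (fun p : OrthGrp n × OrthGrp n => p.1 (p.2 x)) =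
        (fun p : OrthGrp n × En n => p.1 p.2) ∘ (fun p => (p.1, p.2 x)) := rfl
    show Continuous (fun p : OrthGrp n × OrthGrp n => p.1 (p.2 x))
    rw [this]
    exact orth_continuous_eval₂.comp
      (continuous_fst.prodMk ((orth_continuous_eval x).comp continuous_snd))
  · -- inv
    apply continuous_induced_rng.mpr
    apply continuous_pi
    intro x
    show Continuous (fun A : OrthGrp n => A⁻¹ x)
    rw [continuous_iff_continuousAt]
    intro A₀
    apply tendsto_iff_dist_tendsto_zero.mpr
    have heq : ∀ A : OrthGrp n, dist (A⁻¹ x) (A₀⁻¹ x) = dist x (A (A₀⁻¹ x)) := by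
      intro A
      conv_lhs => rw [← A.dist_map]
      congr 1
      exact (A.apply_symm_apply x)
    have : Filter.Tendsto (fun A : OrthGrp n => dist x (A (A₀⁻¹ x))) (𝓝 A₀) (𝓝 0) := by
      have hc : Continuous (fun A : OrthGrp n => dist x (A (A₀⁻¹ x))) :=
        continuous_const.dist (orth_continuous_eval _)
      have := hc.tendsto A₀
      simpa using this
    exact this.congr (fun A => (heq A).symm)

/-- `O(n)` is compact. -/
instance : CompactSpace (OrthGrp n) := by
  set R : Set (En n → En n) :=
    {f | (∀ x y, f (x + y) = f x + f y) ∧ (∀ (c : ℝ) x, f (c • x) = c • f x) ∧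
      ∀ x, ‖f x‖ = ‖x‖} with hR
  have h1 : IsClosed {f : En n → En n | ∀ x y, f (x + y) = f x + f y} := by
    have he : {f : En n → En n | ∀ x y, f (x + y) = f x + f y} =
        ⋂ x, ⋂ y, {f : En n → En n | f (x + y) = f x + f y} := by ext f; simp
    rw [he]
    exact isClosed_iInter fun x => isClosed_iInter fun y =>
      isClosed_eq (continuous_apply (x + y)) ((continuous_apply x).add (continuous_apply y))
  have h2 : IsClosed {f : En n → En n | ∀ (c : ℝ) x, f (c • x) = c • f x} := by
    have he : {f : En n → En n | ∀ (c : ℝ) x, f (c • x) = c • f x} =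
        ⋂ (c : ℝ), ⋂ x, {f : En n → En n | f (c • x) = c • f x} := by ext f; simp
    rw [he]
    exact isClosed_iInter fun c => isClosed_iInter fun x =>
      isClosed_eq (continuous_apply (c • x)) ((continuous_apply x).const_smul c)
  have h3 : IsClosed {f : En n → En n | ∀ x, ‖f x‖ = ‖x‖} := by
    have he : {f : En n → En n | ∀ x, ‖f x‖ = ‖x‖} =
        ⋂ x, {f : En n → En n | ‖f x‖ = ‖x‖} := by ext f; simp
    rw [he]
    exact isClosed_iInter fun x =>
      isClosed_eq ((continuous_apply x).norm) continuous_const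
  have hRclosed : IsClosed R := h1.inter (h2.inter h3)
  have hRsub : R ⊆ Set.pi Set.univ (fun x => Metric.closedBall (0 : En n) ‖x‖) := by
    rintro f ⟨_, _, h3⟩ x _
    simpa [Metric.mem_closedBall, dist_eq_norm] using (h3 x).le
  have hRcomp : IsCompact R :=
    IsCompact.of_isClosed_subset (isCompact_univ_pi (fun x => isCompact_closedBall 0 ‖x‖))
      hRclosed hRsub
  have hrange : Set.range (fun A : OrthGrp n => (A : En n → En n)) = R := by
    apply Set.Subset.antisymm
    · rintro _ ⟨A, rfl⟩
      exact ⟨fun x y => A.map_add x y, fun c x => A.map_smul c x, fun x => A.norm_map x⟩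
    · rintro f ⟨h1, h2, h3⟩
      set lm : En n →ₗ[ℝ] En n :=
        { toFun := f, map_add' := h1, map_smul' := h2 } with hlm
      have hinj : Function.Injective lm := by
        intro a b hab
        have : ‖a - b‖ = 0 := by
          rw [← h3 (a - b)]
          show ‖lm (a - b)‖ = 0
          rw [map_sub, hab, sub_self, norm_zero]
        simpa [sub_eq_zero] using norm_eq_zero.mp this
      have hsurj : Function.Surjective lm :=
        (LinearMap.injective_iff_surjective).mp hinj
      set li : En n →ₗᵢ[ℝ] En n := ⟨lm, h3⟩ with hli
      exact ⟨LinearIsometryEquiv.ofSurjective li hsurj, rfl⟩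
  constructor
  rw [orth_inducing.isCompact_iff]
  rw [Set.image_univ, hrange]
  exact hRcomp

end OrthTop

section IsomTop
variable {n : ℕ}

lemma isom_inducing : Topology.IsInducing (fun g : IsomE n => (g.left, g.right)) := ⟨rfl⟩

lemma isom_continuous_left : Continuous (fun g : IsomE n => g.left) :=
  continuous_fst.comp isom_inducing.continuous

lemma isom_continuous_right : Continuous (fun g : IsomE n => g.right) :=
  continuous_snd.comp isom_inducing.continuous

instance : T2Space (IsomE n) := by
  apply Topology.IsEmbedding.t2Space (f := fun g : IsomE n => (g.left, g.right))
  refine ⟨isom_inducing, ?_⟩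
  intro g h hgh
  exact SemidirectProduct.ext (congrArg Prod.fst hgh) (congrArg Prod.snd hgh)

lemma isom_continuous_inl :
    Continuous (fun v : Multiplicative (En n) => (SemidirectProduct.inl v : IsomE n)) := by
  apply continuous_induced_rng.mpr
  exact continuous_id.prodMk continuous_const

lemma isom_continuous_inr :
    Continuous (fun A : OrthGrp n => (SemidirectProduct.inr A : IsomE n)) := by
  apply continuous_induced_rng.mpr
  exact continuous_const.prodMk continuous_id

lemma trans_carrier : (transSubgroup n : Set (IsomE n)) = {g | g.right = 1} := by
  ext g
  constructor
  · rintro ⟨v, rfl⟩; rfl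
  · intro hg
    exact ⟨g.left, SemidirectProduct.ext rfl hg.symm⟩

lemma sph_carrier : (sphSubgroup n : Set (IsomE n)) = {g | g.left = 1} := by
  ext g
  constructor
  · rintro ⟨A, rfl⟩; rfl
  · intro hg
    exact ⟨g.right, SemidirectProduct.ext hg.symm rfl⟩

lemma isClosed_trans : IsClosed (transSubgroup n : Set (IsomE n)) := by
  rw [trans_carrier]
  exact isClosed_singleton.preimage isom_continuous_right

lemma isClosed_sph : IsClosed (sphSubgroup n : Set (IsomE n)) := by
  rw [sph_carrier]
  exact isClosed_singleton.preimage isom_continuous_left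

lemma continuous_tPart : Continuous (fun g : IsomE n => tPart g) := isom_continuous_left

end IsomTop

section ClosedSubgroupRn
variable {n : ℕ}

/-- The maximal linear subspace contained in a closed additive subgroup. -/
def lineSpace (A : AddSubgroup (En n)) : Submodule ℝ (En n) where
  carrier := {x | ∀ t : ℝ, t • x ∈ A}
  add_mem' := by
    intro a b ha hb t
    rw [smul_add]
    exact A.add_mem (ha t) (hb t)
  zero_mem' := by intro t; rw [smul_zero]; exact A.zero_mem
  smul_mem' := by
    intro c x hx t
    rw [smul_smul]
    exact hx (t * c)

lemma lineSpace_le (A : AddSubgroup (En n)) : (lineSpace A : Set (En n)) ⊆ A := by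
  intro x hx
  simpa using hx 1

/-- A closed subgroup of `ℝⁿ` containing no line meets a small ball only at `0`. -/
lemma discrete_of_no_line (A : AddSubgroup (En n)) (hA : IsClosed (A : Set (En n)))
    (hno : ∀ x : En n, x ∈ A → (∀ t : ℝ, t • x ∈ A) → x = 0) :
    ∃ ε : ℝ, 0 < ε ∧ ∀ d ∈ A, ‖d‖ < ε → d = 0 := by
  by_contra hcon
  push_neg at hcon
  have hseq : ∀ k : ℕ, ∃ d : En n, d ∈ A ∧ ‖d‖ < 1 / (k + 1) ∧ d ≠ 0 := by
    intro k
    obtain ⟨d, hdA, hdn, hd0⟩ := hcon (1 / (k + 1)) (by positivity)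
    exact ⟨d, hdA, hdn, hd0⟩
  choose d hdA hdn hd0 using hseq
  set u : ℕ → En n := fun k => ‖d k‖⁻¹ • d k with hu
  have hdpos : ∀ k, 0 < ‖d k‖ := fun k => norm_pos_iff.mpr (hd0 k)
  have hunorm : ∀ k, ‖u k‖ = 1 := by
    intro k
    rw [hu, norm_smul, norm_inv, norm_norm, inv_mul_cancel₀ (hdpos k).ne']
  have husphere : ∀ k, u k ∈ Metric.sphere (0 : En n) 1 := by
    intro k
    simpa [Metric.mem_sphere, dist_eq_norm] using hunorm k
  obtain ⟨u₀, hu₀mem, φ, hφ, hulim⟩ :=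
    (isCompact_sphere (0 : En n) 1).tendsto_subseq husphere
  have hu₀norm : ‖u₀‖ = 1 := by simpa [Metric.mem_sphere, dist_eq_norm] using hu₀mem
  have hdlim : Filter.Tendsto (fun k => ‖d (φ k)‖) Filter.atTop (nhds 0) := by
    have hb : ∀ k : ℕ, ‖d (φ k)‖ ≤ 1 / (k + 1) := by
      intro k
      refine (hdn (φ k)).le.trans ?_
      have h1 : ((k : ℝ) + 1) ≤ (φ k : ℝ) + 1 := by
        have := hφ.id_le k
        have : (k : ℝ) ≤ (φ k : ℝ) := by exact_mod_cast this
        linarith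
      exact one_div_le_one_div_of_le (by positivity) h1
    exact squeeze_zero (fun k => norm_nonneg _) hb tendsto_one_div_add_atTop_nhds_zero_nat
  -- every multiple t • u₀ lies in A
  have hline : ∀ t : ℝ, t • u₀ ∈ A := by
    intro t
    have hmem : ∀ k, ((round (t / ‖d (φ k)‖) : ℤ) : ℝ) • d (φ k) ∈ A := by
      intro k
      rw [Int.cast_smul_eq_zsmul]
      exact A.zsmul_mem (hdA (φ k)) _
    have hlim : Filter.Tendsto (fun k => ((round (t / ‖d (φ k)‖) : ℤ) : ℝ) • d (φ k))
        Filter.atTop (nhds (t • u₀)) := by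
      apply tendsto_iff_dist_tendsto_zero.mpr
      have hbound : ∀ k, dist (((round (t / ‖d (φ k)‖) : ℤ) : ℝ) • d (φ k)) (t • u₀) ≤
          ‖d (φ k)‖ / 2 + |t| * dist (u (φ k)) u₀ := by
        intro k
        set m : ℝ := ((round (t / ‖d (φ k)‖) : ℤ) : ℝ) with hm
        have hd_eq : d (φ k) = ‖d (φ k)‖ • u (φ k) := by
          rw [hu, smul_smul, mul_inv_cancel₀ (hdpos (φ k)).ne', one_smul]
        calc dist (m • d (φ k)) (t • u₀)
            ≤ dist (m • d (φ k)) (t • u (φ k)) + dist (t • u (φ k)) (t • u₀) :=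
              dist_triangle _ _ _
          _ ≤ ‖d (φ k)‖ / 2 + |t| * dist (u (φ k)) u₀ := by
              gcongr
              · conv_lhs => rw [hd_eq, smul_smul]
                rw [dist_eq_norm, ← sub_smul, norm_smul, hunorm, mul_one]
                have habs : |m - t / ‖d (φ k)‖| ≤ 1 / 2 := by
                  rw [hm, abs_sub_comm]
                  exact abs_sub_round _
                have hme : |m * ‖d (φ k)‖ - t| = |m - t / ‖d (φ k)‖| * ‖d (φ k)‖ := by
                  have h0 : m * ‖d (φ k)‖ - t = (m - t / ‖d (φ k)‖) * ‖d (φ k)‖ := by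
                    rw [sub_mul, div_mul_cancel₀ _ (hdpos (φ k)).ne']
                  rw [h0, abs_mul, abs_norm]
                rw [Real.norm_eq_abs, hme]
                calc |m - t / ‖d (φ k)‖| * ‖d (φ k)‖ ≤ (1 / 2) * ‖d (φ k)‖ :=
                      mul_le_mul_of_nonneg_right habs (norm_nonneg _)
                  _ = ‖d (φ k)‖ / 2 := by ring
              · rw [dist_smul₀, Real.norm_eq_abs]
      apply squeeze_zero (fun k => dist_nonneg) hbound
      have h1 : Filter.Tendsto (fun k => ‖d (φ k)‖ / 2) Filter.atTop (nhds 0) := by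
        simpa using hdlim.div_const 2
      have h2 : Filter.Tendsto (fun k => |t| * dist (u (φ k)) u₀) Filter.atTop (nhds 0) := by
        have : Filter.Tendsto (fun k => dist (u (φ k)) u₀) Filter.atTop (nhds 0) :=
          tendsto_iff_dist_tendsto_zero.mp hulim
        simpa using this.const_mul |t|
      simpa using h1.add h2
    exact hA.mem_of_tendsto hlim (Filter.Eventually.of_forall hmem)
  have hu₀A : u₀ ∈ A := by simpa using hline 1
  have : u₀ = 0 := hno u₀ hu₀A hline
  rw [this, norm_zero] at hu₀norm
  norm_num at hu₀norm

end ClosedSubgroupRn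

section RnGen
variable {n : ℕ}

lemma lineSpace_isClosed (A : AddSubgroup (En n)) : IsClosed (lineSpace A : Set (En n)) :=
  Submodule.closed_of_finiteDimensional _

/-- A closed additive subgroup of `ℝⁿ` is compactly generated. -/
theorem closed_addSubgroup_compactly_generated (A : AddSubgroup (En n))
    (hA : IsClosed (A : Set (En n))) :
    ∃ K : Set (En n), IsCompact K ∧ K ⊆ A ∧ AddSubgroup.closure K = A := by
  obtain ⟨W, hW⟩ := Submodule.exists_isCompl (lineSpace A)
  set D : AddSubgroup (En n) := A ⊓ W.toAddSubgroup with hD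
  have hDclosed : IsClosed (D : Set (En n)) :=
    hA.inter (Submodule.closed_of_finiteDimensional W)
  have hDnoline : ∀ x : En n, x ∈ D → (∀ t : ℝ, t • x ∈ D) → x = 0 := by
    rintro x ⟨hxA, hxW⟩ hline
    have hxV : x ∈ lineSpace A := fun t => (hline t).1
    have : x ∈ lineSpace A ⊓ W := ⟨hxV, hxW⟩
    rwa [hW.inf_eq_bot, Submodule.mem_bot] at this
  obtain ⟨ε, hε, hsep⟩ := discrete_of_no_line D hDclosed hDnoline
  -- D is discrete, hence finitely generated
  set Dz : Submodule ℤ (En n) := AddSubgroup.toIntSubmodule D with hDz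
  have : DiscreteTopology Dz := by
    apply discreteTopology_of_isOpen_singleton_zero
    have : ({0} : Set Dz) = (Subtype.val) ⁻¹' (Metric.ball (0 : En n) ε) := by
      ext d
      simp only [Set.mem_singleton_iff, Set.mem_preimage, Metric.mem_ball, dist_zero_right]
      constructor
      · rintro rfl; simpa using hε
      · intro hd
        exact Subtype.ext (hsep d.1 d.2 hd)
    rw [this]
    exact Metric.isOpen_ball.preimage continuous_subtype_val
  have hfin : Module.Finite ℤ Dz := inferInstance
  have hfg : Dz.FG := by
    rw [← Submodule.fg_top]
    exact Module.Finite.fg_top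
  obtain ⟨F, hF⟩ := hfg
  -- the compact generating set
  set K : Set (En n) := ((lineSpace A : Set (En n)) ∩ Metric.closedBall 0 1) ∪ ↑F with hK
  refine ⟨K, ?_, ?_, ?_⟩
  · apply IsCompact.union
    · exact (isCompact_closedBall (0 : En n) 1).inter_left (lineSpace_isClosed A)
    · exact F.finite_toSet.isCompact
  · rintro x (⟨hxV, _⟩ | hxF)
    · exact lineSpace_le A hxV
    · have : x ∈ Dz := by
        rw [← hF]
        exact Submodule.subset_span hxF
      exact this.1
  · apply le_antisymm
    · rw [AddSubgroup.closure_le]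
      rintro x (⟨hxV, _⟩ | hxF)
      · exact lineSpace_le A hxV
      · have : x ∈ Dz := by
          rw [← hF]
          exact Submodule.subset_span hxF
        exact this.1
    · intro a haA
      -- decompose a = v + w
      have hatop : a ∈ lineSpace A ⊔ W := by rw [hW.sup_eq_top]; trivial
      obtain ⟨v, hvV, w, hwW, hvw⟩ := Submodule.mem_sup.mp hatop
      have hwD : w ∈ D := by
        refine ⟨?_, hwW⟩
        have : w = a - v := by rw [← hvw]; abel
        rw [this]
        exact A.sub_mem haA (lineSpace_le A hvV)
      -- w is in the closure of F
      have hwK : w ∈ AddSubgroup.closure K := by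
        have hwspan : w ∈ Submodule.span ℤ (↑F : Set (En n)) := by rw [hF]; exact hwD
        have : Submodule.span ℤ (↑F : Set (En n)) ≤
            (AddSubgroup.closure K).toIntSubmodule := by
          rw [Submodule.span_le]
          intro x hx
          exact AddSubgroup.subset_closure (Set.mem_union_right _ hx)
        exact this hwspan
      -- v is in the closure of the unit ball of V
      have hvK : v ∈ AddSubgroup.closure K := by
        set m : ℕ := ⌈‖v‖⌉₊ + 1 with hm
        have hmpos : (0 : ℝ) < m := by positivity
        set u : En n := ((m : ℝ))⁻¹ • v with hu
        have huV : u ∈ lineSpace A := Submodule.smul_mem _ _ hvV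
        have hunorm : ‖u‖ ≤ 1 := by
          rw [hu, norm_smul, norm_inv, Real.norm_natCast]
          rw [inv_mul_le_iff₀ hmpos, mul_one]
          calc ‖v‖ ≤ ⌈‖v‖⌉₊ := Nat.le_ceil _
            _ ≤ m := by exact_mod_cast Nat.le_succ _
        have huK : u ∈ K := Set.mem_union_left _ ⟨huV, by
          simpa [Metric.mem_closedBall, dist_eq_norm] using hunorm⟩
        have hveq : v = m • u := by
          rw [hu, ← Nat.cast_smul_eq_nsmul ℝ, smul_smul, mul_inv_cancel₀ hmpos.ne', one_smul]
        rw [hveq]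
        exact AddSubgroup.nsmul_mem _ (AddSubgroup.subset_closure huK) m
      rw [← hvw]
      exact AddSubgroup.add_mem _ hvK hwK

end RnGen

/-- Additive version: a locally compact additive subgroup of a T2 topological
additive group is closed. -/
theorem AddSubgroup.isClosed_of_locallyCompact' {G : Type*} [AddGroup G] [TopologicalSpace G]
    [IsTopologicalAddGroup G] [T2Space G] (H : AddSubgroup G) (hlc : LocallyCompactSpace ↥H) :
    IsClosed (H : Set G) := by
  obtain ⟨C, hCcomp, hCmem⟩ := exists_compact_mem_nhds (0 : ↥H)
  rw [nhds_induced, Filter.mem_comap] at hCmem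
  obtain ⟨U, hU, hUC⟩ := hCmem
  obtain ⟨U', hU'sub, hU'open, hU'mem⟩ := mem_nhds_iff.mp hU
  have hC' : IsCompact (Subtype.val '' C : Set G) := hCcomp.image continuous_subtype_val
  have hsub : U' ∩ (H : Set G) ⊆ Subtype.val '' C := by
    rintro g ⟨hgU, hgH⟩
    exact ⟨⟨g, hgH⟩, hUC (hU'sub hgU), rfl⟩
  set V : Set G := U' ∩ (-U') with hV
  have hVopen : IsOpen V := hU'open.inter hU'open.neg
  rw [← closure_subset_iff_isClosed]
  intro x hx
  have hxV : ∃ h₀ ∈ (H : Set G), h₀ ∈ (fun y => x + y) '' V := by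
    have hopen : IsOpen ((fun y => x + y) '' V) := (Homeomorph.addLeft x).isOpenMap V hVopen
    have hxmem : x ∈ (fun y => x + y) '' V :=
      ⟨0, ⟨hU'mem, by simpa using hU'mem⟩, by simp⟩
    obtain ⟨h₀, hh₀⟩ := (_root_.mem_closure_iff.mp hx) _ hopen hxmem
    exact ⟨h₀, hh₀.2, hh₀.1⟩
  obtain ⟨h₀, hh₀H, v, hvV, hveq⟩ := hxV
  have hy : -h₀ + x = -v := by rw [← hveq, neg_add_rev, add_assoc]; simp
  have hyH : -h₀ + x ∈ _root_.closure (H : Set G) := by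
    have h1 : (-h₀ : G) ∈ _root_.closure (H : Set G) :=
      (_root_.subset_closure (H.neg_mem hh₀H) : _ ∈ _root_.closure (H : Set G))
    exact map_mem_closure₂ continuous_add h1 hx fun a ha b hb => H.add_mem ha hb
  have hvU : -v ∈ U' := hvV.2
  have h2 : -v ∈ _root_.closure (U' ∩ (H : Set G)) :=
    hU'open.inter_closure ⟨hvU, hy ▸ hyH⟩
  have h3 : -v ∈ Subtype.val '' C :=
    (hC'.isClosed.closure_subset_iff.mpr hsub) h2
  obtain ⟨c, _, hc⟩ := h3
  have h4 : -h₀ + x ∈ (H : Set G) := by rw [hy, ← hc]; exact c.2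
  have := H.add_mem hh₀H h4
  simpa using this
-- Lemma (i): locally compact subgroup of a T2 topological group is closed.
theorem Subgroup.isClosed_of_locallyCompact {G : Type*} [Group G] [TopologicalSpace G]
    [IsTopologicalGroup G] [T2Space G] (H : Subgroup G) (hlc : LocallyCompactSpace ↥H) :
    IsClosed (H : Set G) := by
  obtain ⟨C, hCcomp, hCmem⟩ := exists_compact_mem_nhds (1 : ↥H)
  rw [nhds_induced, Filter.mem_comap] at hCmem
  obtain ⟨U, hU, hUC⟩ := hCmem
  obtain ⟨U', hU'sub, hU'open, hU'mem⟩ := mem_nhds_iff.mp hU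
  -- C' := val '' C is compact subset of H with U' ∩ H ⊆ C'
  have hC' : IsCompact (Subtype.val '' C : Set G) := hCcomp.image continuous_subtype_val
  have hsub : U' ∩ (H : Set G) ⊆ Subtype.val '' C := by
    rintro g ⟨hgU, hgH⟩
    exact ⟨⟨g, hgH⟩, hUC (hU'sub hgU), rfl⟩
  set V : Set G := U' ∩ U'⁻¹ with hV
  have hVopen : IsOpen V := hU'open.inter hU'open.inv
  rw [← closure_subset_iff_isClosed]
  intro x hx
  have hxV : ∃ h₀ ∈ (H : Set G), h₀ ∈ (fun y => x * y) '' V := by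
    have hopen : IsOpen ((fun y => x * y) '' V) := hVopen.smul x
    have hxmem : x ∈ (fun y => x * y) '' V := ⟨1, ⟨hU'mem, by simpa using hU'mem⟩, by simp⟩
    obtain ⟨h₀, hh₀⟩ := (_root_.mem_closure_iff.mp hx) _ hopen hxmem
    exact ⟨h₀, hh₀.2, hh₀.1⟩
  obtain ⟨h₀, hh₀H, v, hvV, hveq⟩ := hxV
  -- y = h₀⁻¹ * x = v⁻¹
  have hy : h₀⁻¹ * x = v⁻¹ := by
    rw [← hveq]; group
  have hyH : h₀⁻¹ * x ∈ _root_.closure (H : Set G) := by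
    have : (h₀⁻¹ : G) ∈ _root_.closure (H : Set G) := (_root_.subset_closure (H.inv_mem hh₀H) : _ ∈ _root_.closure (H : Set G))
    exact map_mem_closure₂ continuous_mul this hx fun a ha b hb => H.mul_mem ha hb
  have hvU : v⁻¹ ∈ U' := hvV.2
  have : v⁻¹ ∈ _root_.closure (U' ∩ (H : Set G)) :=
    hU'open.inter_closure ⟨hvU, hy ▸ hyH⟩
  have : v⁻¹ ∈ Subtype.val '' C :=
    (hC'.isClosed.closure_subset_iff.mpr hsub) this
  obtain ⟨c, _, hc⟩ := this
  have : h₀⁻¹ * x ∈ (H : Set G) := by rw [hy, ← hc]; exact c.2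
  have := H.mul_mem hh₀H this
  simpa using this

section Main
variable {n : ℕ}

/-- The lattice of translation vectors of `H`, as an additive subgroup. -/
def latticeAdd (H : Subgroup (IsomE n)) : AddSubgroup (En n) where
  carrier := latticeLH H
  add_mem' := by
    intro a b ha hb
    have : (SemidirectProduct.inl (Multiplicative.ofAdd (a + b)) : IsomE n) =
        SemidirectProduct.inl (Multiplicative.ofAdd a) *
          SemidirectProduct.inl (Multiplicative.ofAdd b) := by
      rw [← map_mul]; rfl
    show SemidirectProduct.inl (Multiplicative.ofAdd (a + b)) ∈ H
    rw [this]
    exact H.mul_mem ha hb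
  zero_mem' := by
    show SemidirectProduct.inl (Multiplicative.ofAdd (0 : En n)) ∈ H
    have : SemidirectProduct.inl (Multiplicative.ofAdd (0 : En n)) = (1 : IsomE n) := map_one _
    rw [this]
    exact H.one_mem
  neg_mem' := by
    intro a ha
    show SemidirectProduct.inl (Multiplicative.ofAdd (-a)) ∈ H
    have : SemidirectProduct.inl (Multiplicative.ofAdd (-a)) =
        (SemidirectProduct.inl (Multiplicative.ofAdd a) : IsomE n)⁻¹ := by
      rw [← map_inv]; rfl
    rw [this]
    exact H.inv_mem ha

theorem split_locally_compact_is_compactly_generated' (H : Subgroup (IsomE n))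
    (hsplit : Splits H) (hlc : LocallyCompactSpace ↥H) :
    ∃ S : Set ↥H, IsCompact S ∧ Subgroup.closure S = ⊤ := by
  classical
  set Tset : Set ↥H := {h | (h : IsomE n).right = 1} with hTset
  set Sset : Set ↥H := {h | (h : IsomE n).left = 1} with hSset
  have hTclosed : IsClosed Tset :=
    isClosed_singleton.preimage (isom_continuous_right.comp continuous_subtype_val)
  have hSclosed : IsClosed Sset :=
    isClosed_singleton.preimage (isom_continuous_left.comp continuous_subtype_val)
  haveI hTlc : LocallyCompactSpace ↥Tset :=
    Topology.IsInducing.subtypeVal.locallyCompactSpace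
      (by rw [Subtype.range_coe]; exact hTclosed.isLocallyClosed)
  haveI hSlc : LocallyCompactSpace ↥Sset :=
    Topology.IsInducing.subtypeVal.locallyCompactSpace
      (by rw [Subtype.range_coe]; exact hSclosed.isLocallyClosed)
  set A : AddSubgroup (En n) := latticeAdd H with hA
  set B : Subgroup (OrthGrp n) := H.comap (SemidirectProduct.inr) with hB
  -- homeomorphism between Tset and A
  have hTmem : ∀ h : ↥Tset, SemidirectProduct.inl (Multiplicative.ofAdd (tPart (h.1 : IsomE n))) =
      (h.1 : IsomE n) := by
    intro h
    have h1 := SemidirectProduct.inl_left_mul_inr_right (h.1 : IsomE n)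
    rw [h.2, map_one, mul_one] at h1
    exact h1
  let eT : ↥Tset ≃ₜ ↥A :=
    { toFun := fun h => ⟨tPart (h.1 : IsomE n), by
        show SemidirectProduct.inl (Multiplicative.ofAdd (tPart (h.1 : IsomE n))) ∈ H
        rw [hTmem h]; exact h.1.2⟩
      invFun := fun v => ⟨⟨SemidirectProduct.inl (Multiplicative.ofAdd v.1), v.2⟩, by
        show (SemidirectProduct.inl (Multiplicative.ofAdd v.1) : IsomE n).right = 1
        simp⟩
      left_inv := fun h => Subtype.ext (Subtype.ext (hTmem h))
      right_inv := fun v => Subtype.ext rfl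
      continuous_toFun := by
        exact ((continuous_tPart.comp continuous_subtype_val).comp
          continuous_subtype_val).subtype_mk _
      continuous_invFun := by
        exact ((isom_continuous_inl.comp continuous_subtype_val).subtype_mk _).subtype_mk _ }
  -- homeomorphism between Sset and B
  have hSmem : ∀ h : ↥Sset, SemidirectProduct.inr ((h.1 : IsomE n).right) = (h.1 : IsomE n) := by
    intro h
    have h1 := SemidirectProduct.inl_left_mul_inr_right (h.1 : IsomE n)
    rw [h.2, map_one, one_mul] at h1
    exact h1
  let eS : ↥Sset ≃ₜ ↥B :=
    { toFun := fun h => ⟨(h.1 : IsomE n).right, by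
        show SemidirectProduct.inr ((h.1 : IsomE n).right) ∈ H
        rw [hSmem h]; exact h.1.2⟩
      invFun := fun b => ⟨⟨SemidirectProduct.inr b.1, b.2⟩, by
        show (SemidirectProduct.inr b.1 : IsomE n).left = 1
        simp⟩
      left_inv := fun h => Subtype.ext (Subtype.ext (hSmem h))
      right_inv := fun b => Subtype.ext rfl
      continuous_toFun := by
        exact ((isom_continuous_right.comp continuous_subtype_val).comp
          continuous_subtype_val).subtype_mk _
      continuous_invFun := by
        exact ((isom_continuous_inr.comp continuous_subtype_val).subtype_mk _).subtype_mk _ }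
  haveI hAlc : LocallyCompactSpace ↥A := eT.locallyCompactSpace_iff.mp hTlc
  haveI hBlc : LocallyCompactSpace ↥B := eS.locallyCompactSpace_iff.mp hSlc
  -- A is a closed subgroup of ℝⁿ, hence compactly generated
  have hAclosed : IsClosed (A : Set (En n)) := AddSubgroup.isClosed_of_locallyCompact' A hAlc
  obtain ⟨K, hKcomp, hKsub, hKgen⟩ := closed_addSubgroup_compactly_generated A hAclosed
  -- B is a closed subgroup of the compact group O(n), hence compact;
  -- so Sset is compact.
  have hBclosed : IsClosed (B : Set (OrthGrp n)) := Subgroup.isClosed_of_locallyCompact B hBlc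
  have hBcomp : IsCompact (B : Set (OrthGrp n)) := hBclosed.isCompact
  haveI : CompactSpace ↥B := isCompact_iff_compactSpace.mp hBcomp
  haveI : CompactSpace ↥Sset := eS.symm.compactSpace
  have hSsetcomp : IsCompact Sset := isCompact_iff_compactSpace.mpr inferInstance
  -- the translation generating set inside H
  let f : ↥A → ↥H := fun v => ⟨SemidirectProduct.inl (Multiplicative.ofAdd v.1), v.2⟩
  have hfcont : Continuous f :=
    ((isom_continuous_inl.comp continuous_subtype_val)).subtype_mk _
  have hKpre : IsCompact (Subtype.val ⁻¹' K : Set ↥A) :=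
    (Topology.IsInducing.subtypeVal.isCompact_preimage_iff
      (by rw [Subtype.range_coe]; exact hKsub)).mpr hKcomp
  set ST : Set ↥H := f '' (Subtype.val ⁻¹' K) with hST
  have hSTcomp : IsCompact ST := hKpre.image hfcont
  refine ⟨ST ∪ Sset, hSTcomp.union hSsetcomp, ?_⟩
  rw [eq_top_iff]
  rintro h -
  obtain ⟨h1mem, h2mem⟩ := hsplit (↑h) h.2
  have hdecomp : h = (⟨SemidirectProduct.inl (h : IsomE n).left, h1mem⟩ : ↥H) *
      ⟨SemidirectProduct.inr (h : IsomE n).right, h2mem⟩ := by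
    apply Subtype.ext
    show (h : IsomE n) = SemidirectProduct.inl (h : IsomE n).left *
      SemidirectProduct.inr (h : IsomE n).right
    exact (SemidirectProduct.inl_left_mul_inr_right _).symm
  rw [hdecomp]
  apply Subgroup.mul_mem
  · -- translation part
    have hvA : tPart (h : IsomE n) ∈ A := h1mem
    rw [← hKgen] at hvA
    have pmem : ∀ v : En n, v ∈ AddSubgroup.closure K →
        SemidirectProduct.inl (Multiplicative.ofAdd v) ∈ H := by
      intro v hv
      rw [hKgen] at hv
      exact hv
    have key : ∀ (v : En n) (hv : v ∈ AddSubgroup.closure K),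
        (⟨SemidirectProduct.inl (Multiplicative.ofAdd v), pmem v hv⟩ : ↥H) ∈
          Subgroup.closure (ST ∪ Sset) := by
      intro v hv
      induction hv using AddSubgroup.closure_induction with
      | mem x hx =>
        apply Subgroup.subset_closure
        apply Set.mem_union_left
        exact ⟨⟨x, hKsub hx⟩, hx, rfl⟩
      | zero =>
        have : (⟨SemidirectProduct.inl (Multiplicative.ofAdd (0 : En n)),
            pmem 0 (AddSubgroup.zero_mem _)⟩ : ↥H) = 1 := by
          apply Subtype.ext
          show SemidirectProduct.inl (Multiplicative.ofAdd (0 : En n)) = 1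
          exact map_one _
        rw [this]
        exact Subgroup.one_mem _
      | add x y hx hy px py =>
        have : (⟨SemidirectProduct.inl (Multiplicative.ofAdd (x + y)),
            pmem _ (AddSubgroup.add_mem _ hx hy)⟩ : ↥H) =
            ⟨SemidirectProduct.inl (Multiplicative.ofAdd x), pmem x hx⟩ *
            ⟨SemidirectProduct.inl (Multiplicative.ofAdd y), pmem y hy⟩ := by
          apply Subtype.ext
          show SemidirectProduct.inl (Multiplicative.ofAdd (x + y)) = _
          simp only [MulMemClass.coe_mul]
          rw [← map_mul]
          rfl
        rw [this]
        exact Subgroup.mul_mem _ px py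
      | neg x hx px =>
        have : (⟨SemidirectProduct.inl (Multiplicative.ofAdd (-x)),
            pmem _ (AddSubgroup.neg_mem _ hx)⟩ : ↥H) =
            (⟨SemidirectProduct.inl (Multiplicative.ofAdd x), pmem x hx⟩ : ↥H)⁻¹ := by
          apply Subtype.ext
          show SemidirectProduct.inl (Multiplicative.ofAdd (-x)) = _
          simp only [InvMemClass.coe_inv]
          rw [← map_inv]
          rfl
        rw [this]
        exact Subgroup.inv_mem _ px
    exact key (tPart (h : IsomE n)) hvA
  · apply Subgroup.subset_closure
    apply Set.mem_union_right
    show (SemidirectProduct.inr (h : IsomE n).right : IsomE n).left = 1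
    simp

end Main

/-- **A split, locally compact subgroup of `Isom(𝔼ⁿ)` is compactly generated**:
`H = ⟨S⟩` for some compact subset `S ⊆ H`. -/
theorem split_locally_compact_is_compactly_generated (n : ℕ) (H : Subgroup (IsomE n))
    (hsplit : Splits H) (hlc : LocallyCompactSpace ↥H) :
    ∃ S : Set ↥H, IsCompact S ∧ Subgroup.closure S = ⊤ := by
  exact split_locally_compact_is_compactly_generated' H hsplit hlc
end
end

section
/- Let H be a split, locally compact subgroup of G = T ⋊ O(n) = Isom(𝔼ⁿ). Then the inclusion of the translation part T_H = T ∩ H into T ≅ ℝⁿ is a quasi-isometric embedding (with respect to any word metric coming from a compact generating set of T_H and the Euclidean metric on T). -/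
noncomputable section
set_option maxHeartbeats 1000000
set_option synthInstance.maxHeartbeats 400000


namespace QIE
variable {n : ℕ} {H : Subgroup (IsomE n)}

abbrev K (n : ℕ) (H : Subgroup (IsomE n)) := ↥(H ⊓ transSubgroup n)

def ν (g : K n H) : En n := tPart (g : IsomE n)

lemma right_eq_one (g : K n H) : (g : IsomE n).right = 1 := by
  obtain ⟨-, v, hv⟩ := g.2
  rw [← hv]; rfl

lemma ν_mul (g h : K n H) : ν (g * h) = ν g + ν h := by
  have : ((g * h : K n H) : IsomE n).left
      = (g : IsomE n).left * rotAction n (g : IsomE n).right (h : IsomE n).left := rfl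
  simp only [ν, tPart, this, right_eq_one g, map_one, MulAut.one_apply]
  rfl

lemma ν_one : ν (1 : K n H) = 0 := rfl

lemma ν_inj : Function.Injective (ν (n := n) (H := H)) := by
  intro g h hgh
  have hg : (g : IsomE n) = SemidirectProduct.inl (g : IsomE n).left := by
    obtain ⟨-, v, hv⟩ := g.2; rw [← hv]; rfl
  have hh : (h : IsomE n) = SemidirectProduct.inl (h : IsomE n).left := by
    obtain ⟨-, v, hv⟩ := h.2; rw [← hv]; rfl
  have : (g : IsomE n).left = (h : IsomE n).left := hgh
  ext1; rw [hg, hh, this]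

lemma ν_inv (g : K n H) : ν g⁻¹ = - ν g := by
  have := ν_mul g⁻¹ g
  simp only [inv_mul_cancel, ν_one] at this
  exact eq_neg_of_add_eq_zero_left this.symm

lemma ν_continuous : Continuous (ν (n := n) (H := H)) := by
  have h1 : Continuous fun g : IsomE n => (g.left, g.right) := continuous_induced_dom
  have h2 : Continuous fun g : IsomE n => tPart g := (continuous_fst.comp h1)
  exact h2.comp continuous_subtype_val

lemma ν_inducing : Topology.IsInducing (ν (n := n) (H := H)) := by
  constructor
  refine le_antisymm (continuous_iff_le_induced.mp ν_continuous) ?_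
  rw [← continuous_id_iff_le]
  letI tt : TopologicalSpace (K n H) := TopologicalSpace.induced (ν (n := n) (H := H)) inferInstance
  have hν : @Continuous _ _ tt _ (ν (n := n) (H := H)) := continuous_induced_dom
  have hleft : @Continuous _ _ tt _ (fun g : K n H => ((g : IsomE n).left : Multiplicative (En n))) := hν
  have hright : @Continuous _ _ tt _ (fun g : K n H => (g : IsomE n).right) := by
    have : (fun g : K n H => (g : IsomE n).right) = fun _ => (1 : OrthGrp n) :=
      funext right_eq_one
    rw [this]; exact continuous_const
  have hpair : @Continuous _ _ tt _ (fun g : K n H => (((g : IsomE n).left, (g : IsomE n).right) :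
      Multiplicative (En n) × OrthGrp n)) := hleft.prodMk hright
  have hval : @Continuous _ _ tt _ (fun g : K n H => (g : IsomE n)) :=
    continuous_induced_rng.mpr hpair
  exact hval.subtype_mk _

lemma transSubgroup_closed : IsClosed ((transSubgroup n : Subgroup (IsomE n)) : Set (IsomE n)) := by
  have h1 : Continuous fun g : IsomE n => (g.left, g.right) := continuous_induced_dom
  have h2 : Continuous fun A : OrthGrp n => (A : En n → En n) := continuous_induced_dom
  have h3 : Continuous fun g : IsomE n => ((g.right : En n → En n)) :=
    h2.comp (continuous_snd.comp h1)
  have hset : ((transSubgroup n : Subgroup (IsomE n)) : Set (IsomE n)) =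
      (fun g : IsomE n => ((g.right : En n → En n))) ⁻¹' {((1 : OrthGrp n) : En n → En n)} := by
    ext g
    constructor
    · rintro ⟨v, rfl⟩; rfl
    · intro hg
      have : (g.right : En n → En n) = ((1 : OrthGrp n) : En n → En n) := hg
      have hr : g.right = 1 := by
        apply LinearIsometryEquiv.ext; intro x; exact congrFun this x
      show g ∈ transSubgroup n
      rw [transSubgroup, SemidirectProduct.range_inl_eq_ker_rightHom]
      exact hr
  rw [hset]
  exact IsClosed.preimage h3 isClosed_singleton

lemma K_locallyCompact (hlc : LocallyCompactSpace ↥H) : LocallyCompactSpace (K n H) := by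
  let j : K n H → ↥H := fun g => ⟨g.1, g.2.1⟩
  have hemb : Topology.IsEmbedding j := by
    refine ⟨⟨?_⟩, fun a b hab => Subtype.ext (congrArg (Subtype.val : ↥H → IsomE n) hab)⟩
    show instTopologicalSpaceSubtype = _
    rw [instTopologicalSpaceSubtype, instTopologicalSpaceSubtype, induced_compose]
    rfl
  have hcl : IsClosed (Set.range j) := by
    have : Set.range j = Subtype.val ⁻¹' ((transSubgroup n : Subgroup (IsomE n)) : Set (IsomE n)) := by
      ext h
      constructor
      · rintro ⟨g, rfl⟩; exact g.2.2
      · intro hh; exact ⟨⟨h.1, h.2, hh⟩, rfl⟩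
    rw [this]
    exact IsClosed.preimage continuous_subtype_val transSubgroup_closed
  exact (Topology.IsClosedEmbedding.mk hemb hcl).locallyCompactSpace

/-- The translation lattice as an additive subgroup of `En n`. -/
def L (n : ℕ) (H : Subgroup (IsomE n)) : AddSubgroup (En n) where
  carrier := Set.range (ν (n := n) (H := H))
  zero_mem' := ⟨1, rfl⟩
  add_mem' := by rintro a b ⟨g, rfl⟩ ⟨h, rfl⟩; exact ⟨g * h, ν_mul g h⟩
  neg_mem' := by rintro a ⟨g, rfl⟩; exact ⟨g⁻¹, ν_inv g⟩

lemma L_locallyCompact (hlc : LocallyCompactSpace ↥H) :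
    LocallyCompactSpace ↥(L n H) := by
  have := K_locallyCompact (n := n) (H := H) hlc
  have hemb : Topology.IsEmbedding (ν (n := n) (H := H)) := ⟨ν_inducing, ν_inj⟩
  have e : K n H ≃ₜ ↥(L n H) :=
    (hemb.toHomeomorph).trans (Homeomorph.setCongr rfl)
  exact e.symm.isOpenEmbedding.locallyCompactSpace

lemma exists_compact_smallball (hlc : LocallyCompactSpace ↥H) :
    ∃ ε > (0:ℝ), IsCompact ((L n H : Set (En n)) ∩ Metric.closedBall 0 ε) := by
  have := L_locallyCompact (n := n) (H := H) hlc
  obtain ⟨C, hCcpt, hCnhds⟩ := exists_compact_mem_nhds (0 : ↥(L n H))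
  obtain ⟨ε, hε, hball⟩ := Metric.mem_nhds_iff.mp hCnhds
  refine ⟨ε / 2, by positivity, ?_⟩
  have hsub : (L n H : Set (En n)) ∩ Metric.closedBall 0 (ε / 2) =
      (Subtype.val '' C) ∩ Metric.closedBall 0 (ε / 2) := by
    apply Set.Subset.antisymm
    · rintro x ⟨hxL, hxb⟩
      refine ⟨⟨⟨x, hxL⟩, hball ?_, rfl⟩, hxb⟩
      have : dist (⟨x, hxL⟩ : ↥(L n H)) 0 = dist x (0 : En n) := rfl
      rw [Metric.mem_ball, this]
      have := Metric.mem_closedBall.mp hxb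
      linarith
    · rintro x ⟨⟨y, _, rfl⟩, hxb⟩
      exact ⟨y.2, hxb⟩
  rw [hsub]
  exact (hCcpt.image continuous_subtype_val).inter_right Metric.isClosed_closedBall

lemma L_isClosed (hlc : LocallyCompactSpace ↥H) : IsClosed (L n H : Set (En n)) := by
  obtain ⟨ε, hε, hA⟩ := exists_compact_smallball (n := n) (H := H) hlc
  rw [← closure_subset_iff_isClosed]
  intro x hx
  obtain ⟨u, huL, hu⟩ := mem_closure_iff_seq_limit.mp hx
  have hc : CauchySeq u := hu.cauchySeq
  obtain ⟨N, hN⟩ := Metric.cauchySeq_iff'.mp hc ε hε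
  set w : ℕ → En n := fun j => u (max j N) - u N with hw
  have hwA : ∀ j, w j ∈ (L n H : Set (En n)) ∩ Metric.closedBall 0 ε := by
    intro j
    refine ⟨(L n H).sub_mem (huL _) (huL N), ?_⟩
    rw [Metric.mem_closedBall, dist_zero_right, hw]
    have := hN (max j N) (le_max_right j N)
    rw [dist_eq_norm] at this
    exact this.le
  have hwt : Filter.Tendsto w Filter.atTop (nhds (x - u N)) := by
    apply Filter.Tendsto.sub _ tendsto_const_nhds
    exact hu.comp (Filter.tendsto_atTop_mono (fun j => le_max_left j N) Filter.tendsto_id)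
  have hmem : x - u N ∈ (L n H : Set (En n)) ∩ Metric.closedBall 0 ε :=
    hA.isClosed.mem_of_tendsto hwt (Filter.Eventually.of_forall hwA)
  have : x = (x - u N) + u N := by abel
  rw [this]
  exact (L n H).add_mem hmem.1 (huL N)

section Words
variable {G : Type*} [Group G] {S : Set G}

lemma word_exists (hSgen : Subgroup.closure S = ⊤) (g : G) :
    ∃ l : List G, (∀ x ∈ l, x ∈ S ∨ x⁻¹ ∈ S) ∧ l.prod = g := by
  have hg : g ∈ Subgroup.closure S := by rw [hSgen]; trivial
  induction hg using Subgroup.closure_induction with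
  | mem x hx => exact ⟨[x], by simp [hx]⟩
  | one => exact ⟨[], by simp⟩
  | mul x y _ _ hx hy =>
    obtain ⟨lx, hlx, hpx⟩ := hx
    obtain ⟨ly, hly, hpy⟩ := hy
    exact ⟨lx ++ ly, by
      constructor
      · intro z hz
        rcases List.mem_append.mp hz with h | h
        · exact hlx z h
        · exact hly z h
      · rw [List.prod_append, hpx, hpy]⟩
  | inv x _ hx =>
    obtain ⟨l, hl, hp⟩ := hx
    refine ⟨(l.map (fun y => y⁻¹)).reverse, ?_, ?_⟩
    · intro z hz
      rw [List.mem_reverse, List.mem_map] at hz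
      obtain ⟨y, hy, rfl⟩ := hz
      rcases hl y hy with h | h
      · right; rwa [inv_inv]
      · left; exact h
    · rw [← List.prod_inv_reverse, hp]

lemma wordLength_le {l : List G} (hl : ∀ x ∈ l, x ∈ S ∨ x⁻¹ ∈ S) {g : G} (hp : l.prod = g) :
    wordLength S g ≤ l.length :=
  Nat.sInf_le ⟨l, hl, hp, rfl⟩

lemma exists_min_word (hSgen : Subgroup.closure S = ⊤) (g : G) :
    ∃ l : List G, (∀ x ∈ l, x ∈ S ∨ x⁻¹ ∈ S) ∧ l.prod = g ∧ l.length = wordLength S g := by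
  have hne : {k | ∃ l : List G, (∀ x ∈ l, x ∈ S ∨ x⁻¹ ∈ S) ∧ l.prod = g ∧ l.length = k}.Nonempty := by
    obtain ⟨l, hl, hp⟩ := word_exists hSgen g
    exact ⟨l.length, l, hl, hp, rfl⟩
  exact Nat.sInf_mem hne

lemma wordLength_one : wordLength S (1 : G) = 0 :=
  Nat.le_zero.mp (wordLength_le (l := []) (by simp) (by simp))

lemma wordLength_mul_le (hSgen : Subgroup.closure S = ⊤) (g h : G) :
    wordLength S (g * h) ≤ wordLength S g + wordLength S h := by
  obtain ⟨lg, hlg, hpg, hLg⟩ := exists_min_word hSgen g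
  obtain ⟨lh, hlh, hph, hLh⟩ := exists_min_word hSgen h
  have := wordLength_le (l := lg ++ lh) (fun x hx => by
    rcases List.mem_append.mp hx with h' | h'
    · exact hlg x h'
    · exact hlh x h') (by rw [List.prod_append, hpg, hph])
  simpa [hLg, hLh] using this

lemma wordLength_inv_le (hSgen : Subgroup.closure S = ⊤) (g : G) :
    wordLength S g⁻¹ ≤ wordLength S g := by
  obtain ⟨l, hl, hp, hL⟩ := exists_min_word hSgen g
  have := wordLength_le (l := (l.map (fun y => y⁻¹)).reverse) (fun z hz => by
    rw [List.mem_reverse, List.mem_map] at hz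
    obtain ⟨y, hy, rfl⟩ := hz
    rcases hl y hy with h | h
    · right; rwa [inv_inv]
    · left; exact h) (by rw [← List.prod_inv_reverse, hp])
  simpa [hL] using this

lemma wordLength_pow_le (hSgen : Subgroup.closure S = ⊤) (g : G) (m : ℕ) :
    wordLength S (g ^ m) ≤ m * wordLength S g := by
  induction m with
  | zero => simp [wordLength_one]
  | succ k ih =>
    calc wordLength S (g ^ (k+1)) = wordLength S (g ^ k * g) := by rw [pow_succ]
    _ ≤ wordLength S (g ^ k) + wordLength S g := wordLength_mul_le hSgen _ _
    _ ≤ k * wordLength S g + wordLength S g := by omega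
    _ = (k + 1) * wordLength S g := by ring

lemma wordLength_zpow_le (hSgen : Subgroup.closure S = ⊤) (g : G) (c : ℤ) :
    wordLength S (g ^ c) ≤ c.natAbs * wordLength S g := by
  rcases Int.natAbs_eq c with h | h
  · rw [h, zpow_natCast]; exact wordLength_pow_le hSgen g _
  · rw [h]
    calc wordLength S (g ^ (-(c.natAbs : ℤ))) = wordLength S ((g ^ (c.natAbs : ℤ))⁻¹) := by
          rw [zpow_neg]
    _ ≤ wordLength S (g ^ (c.natAbs : ℤ)) := wordLength_inv_le hSgen _
    _ = wordLength S (g ^ c.natAbs) := by rw [zpow_natCast]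
    _ ≤ c.natAbs * wordLength S g := wordLength_pow_le hSgen g _
    _ = (-(c.natAbs:ℤ)).natAbs * wordLength S g := by rw [Int.natAbs_neg, Int.natAbs_natCast]

end Words

lemma ν_list_prod (l : List (K n H)) : ν l.prod = (l.map (ν (n := n) (H := H))).sum := by
  induction l with
  | nil => simp [ν_one]
  | cons a t ih => simp [ν_mul, ih]

lemma ν_pow (g : K n H) (m : ℕ) : ν (g ^ m) = m • ν g := by
  induction m with
  | zero => simp [ν_one]
  | succ k ih => rw [pow_succ, ν_mul, ih, succ_nsmul]

lemma ν_zpow (g : K n H) (c : ℤ) : ν (g ^ c) = c • ν g := by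
  rcases Int.natAbs_eq c with h | h
  · rw [h, zpow_natCast, ν_pow, natCast_zsmul]
  · rw [h, zpow_neg, ν_inv, zpow_natCast, ν_pow, ← natCast_zsmul, ← neg_zsmul]

section WithS
variable {S : Set (K n H)}

lemma exists_gen_bound (hScpt : IsCompact S) :
    ∃ M : ℝ, 1 ≤ M ∧ ∀ s ∈ S, ‖ν s‖ ≤ M := by
  obtain ⟨M₀, hM₀⟩ := (hScpt.image ν_continuous).isBounded.subset_closedBall 0
  refine ⟨max 1 M₀, le_max_left _ _, fun s hs => ?_⟩
  have := hM₀ ⟨s, hs, rfl⟩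
  rw [Metric.mem_closedBall, dist_zero_right] at this
  exact this.trans (le_max_right _ _)

lemma norm_le_of_word {l : List (K n H)} {M : ℝ} (hM : ∀ s ∈ S, ‖ν s‖ ≤ M) (hM1 : 1 ≤ M)
    (hl : ∀ x ∈ l, x ∈ S ∨ x⁻¹ ∈ S) : ‖ν l.prod‖ ≤ M * l.length := by
  induction l with
  | nil => simp [ν_one]
  | cons a t ih =>
    have ha : ‖ν a‖ ≤ M := by
      rcases hl a List.mem_cons_self with h | h
      · exact hM a h
      · rw [show ν a = -ν a⁻¹ by rw [ν_inv, neg_neg]]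
        rw [norm_neg]; exact hM _ h
    have ht := ih (fun x hx => hl x (List.mem_cons_of_mem a hx))
    calc ‖ν (a :: t).prod‖ = ‖ν a + ν t.prod‖ := by rw [List.prod_cons, ν_mul]
    _ ≤ ‖ν a‖ + ‖ν t.prod‖ := norm_add_le _ _
    _ ≤ M + M * t.length := by linarith
    _ = M * (a :: t).length := by simp [List.length_cons]; ring

lemma norm_le_wordLength (hScpt : IsCompact S) (hSgen : Subgroup.closure S = ⊤) :
    ∃ M : ℝ, 1 ≤ M ∧ ∀ g : K n H, ‖ν g‖ ≤ M * wordLength S g := by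
  obtain ⟨M, hM1, hM⟩ := exists_gen_bound hScpt
  refine ⟨M, hM1, fun g => ?_⟩
  obtain ⟨l, hl, hp, hL⟩ := exists_min_word hSgen g
  have h2 := norm_le_of_word hM hM1 hl
  rw [hp, hL] at h2
  exact h2

end WithS

section Baire
variable (S : Set (K n H))

def Tgen : Set (En n) := (ν '' S) ∪ ((fun x => -x) '' (ν '' S)) ∪ {0}

def Cm (m : ℕ) : Set (En n) :=
  {x | ∃ l : List (En n), (∀ y ∈ l, y ∈ Tgen S) ∧ l.length = m ∧ l.sum = x}

variable {S}

lemma Tgen_compact (hScpt : IsCompact S) : IsCompact (Tgen S) := by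
  have h1 : IsCompact (ν '' S) := hScpt.image ν_continuous
  exact (h1.union (h1.image continuous_neg)).union isCompact_singleton

lemma Cm_eq_image (m : ℕ) : Cm S m =
    (fun f : Fin m → En n => ∑ i, f i) '' (Set.univ.pi fun _ : Fin m => Tgen S) := by
  ext x
  constructor
  · rintro ⟨l, hmem, hlen, rfl⟩
    subst hlen
    refine ⟨fun i => l.get i, fun i _ => hmem _ (l.get_mem i), ?_⟩
    conv_rhs => rw [← List.ofFn_get l]
    rw [List.sum_ofFn]
  · rintro ⟨f, hf, rfl⟩
    refine ⟨List.ofFn f, ?_, by rw [List.length_ofFn], by rw [List.sum_ofFn]⟩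
    intro y hy
    rw [List.mem_ofFn] at hy
    obtain ⟨i, rfl⟩ := hy
    exact hf i trivial

lemma Cm_compact (hScpt : IsCompact S) (m : ℕ) : IsCompact (Cm S m) := by
  rw [Cm_eq_image]
  exact (isCompact_univ_pi fun _ => Tgen_compact hScpt).image
    (continuous_finset_sum _ fun i _ => continuous_apply i)

lemma Cm_sub (hSgen : Subgroup.closure (S : Set (K n H)) = ⊤) {x : En n} {m : ℕ}
    (hx : x ∈ Cm S m) : ∃ g : K n H, ν g = x ∧ wordLength S g ≤ m := by
  obtain ⟨l, hmem, hlen, rfl⟩ := hx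
  subst hlen
  induction l with
  | nil => exact ⟨1, ν_one, by simp [wordLength_one]⟩
  | cons a t ih =>
    obtain ⟨gt, hgt, hwt⟩ := ih (fun y hy => hmem y (List.mem_cons_of_mem a hy))
    have ha := hmem a List.mem_cons_self
    have : ∃ ga : K n H, ν ga = a ∧ wordLength S ga ≤ 1 := by
      rcases ha with (⟨s, hs, rfl⟩ | ⟨y, ⟨s, hs, rfl⟩, rfl⟩) | h0
      · exact ⟨s, rfl, wordLength_le (l := [s]) (by simp [hs]) (by simp)⟩
      · exact ⟨s⁻¹, ν_inv s, wordLength_le (l := [s⁻¹]) (by simp [hs]) (by simp)⟩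
      · exact ⟨1, by simp only [Set.mem_singleton_iff] at h0; rw [h0]; exact ν_one,
          by simp [wordLength_one]⟩
    obtain ⟨ga, hga, hwa⟩ := this
    refine ⟨ga * gt, ?_, ?_⟩
    · rw [ν_mul, hga, hgt, List.sum_cons]
    · calc wordLength S (ga * gt) ≤ wordLength S ga + wordLength S gt :=
        wordLength_mul_le hSgen _ _
      _ ≤ 1 + t.length := by omega
      _ = (a :: t).length := by simp [List.length_cons, add_comm]

lemma mem_Cm (hSgen : Subgroup.closure (S : Set (K n H)) = ⊤) {g : K n H} {m : ℕ}
    (hwl : wordLength S g ≤ m) : ν g ∈ Cm S m := by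
  obtain ⟨l, hl, hp, hL⟩ := exists_min_word hSgen g
  refine ⟨l.map ν ++ List.replicate (m - l.length) 0, ?_, ?_, ?_⟩
  · intro y hy
    rcases List.mem_append.mp hy with h | h
    · rw [List.mem_map] at h
      obtain ⟨x, hx, rfl⟩ := h
      rcases hl x hx with h' | h'
      · exact Or.inl (Or.inl ⟨x, h', rfl⟩)
      · refine Or.inl (Or.inr ⟨ν x⁻¹, ⟨x⁻¹, h', rfl⟩, ?_⟩)
        simp [ν_inv]
    · rw [List.eq_of_mem_replicate h]
      exact Or.inr rfl
  · rw [List.length_append, List.length_map, List.length_replicate]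
    omega
  · rw [List.sum_append, List.sum_replicate, smul_zero, add_zero, ← ν_list_prod, hp]

lemma small_norm_bound (hlc : LocallyCompactSpace ↥H) (hScpt : IsCompact S)
    (hSgen : Subgroup.closure (S : Set (K n H)) = ⊤) :
    ∃ N₀ : ℕ, ∃ ε > (0:ℝ), ∀ g : K n H, ‖ν g‖ < ε → wordLength S g ≤ N₀ := by
  have hLlc := L_locallyCompact (n := n) (H := H) hlc
  have : Nonempty ↥(L n H) := ⟨0⟩
  have hcover : (⋃ m : ℕ, (Subtype.val ⁻¹' (Cm S m) : Set ↥(L n H))) = Set.univ := by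
    ext x
    simp only [Set.mem_iUnion, Set.mem_preimage, Set.mem_univ, iff_true]
    obtain ⟨g, hg⟩ := x.2
    exact ⟨wordLength S g, hg ▸ mem_Cm hSgen le_rfl⟩
  obtain ⟨m₀, hm₀⟩ := nonempty_interior_of_iUnion_of_closed
    (fun m => (IsClosed.preimage continuous_subtype_val (Cm_compact hScpt m).isClosed))
    hcover
  obtain ⟨x₀, hx₀⟩ := hm₀
  obtain ⟨ε, hε, hball⟩ := Metric.mem_nhds_iff.mp (mem_interior_iff_mem_nhds.mp hx₀)
  refine ⟨2 * m₀, ε, hε, fun g hg => ?_⟩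
  have hx₀C : (x₀ : En n) ∈ Cm S m₀ := Set.mem_preimage.mp (interior_subset hx₀)
  obtain ⟨g₀, hg₀, hw₀⟩ := Cm_sub hSgen hx₀C
  have hyL : (x₀ : En n) + ν g ∈ L n H := (L n H).add_mem x₀.2 ⟨g, rfl⟩
  have hy : (⟨(x₀ : En n) + ν g, hyL⟩ : ↥(L n H)) ∈ Metric.ball x₀ ε := by
    rw [Metric.mem_ball, Subtype.dist_eq, dist_eq_norm, add_sub_cancel_left]
    exact hg
  have hyC : (x₀ : En n) + ν g ∈ Cm S m₀ := hball hy
  obtain ⟨g₁, hg₁, hw₁⟩ := Cm_sub hSgen hyC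
  have : g = g₀⁻¹ * g₁ := by
    apply ν_inj
    rw [ν_mul, ν_inv, hg₀, hg₁]
    abel
  rw [this]
  calc wordLength S (g₀⁻¹ * g₁) ≤ wordLength S g₀⁻¹ + wordLength S g₁ :=
      wordLength_mul_le hSgen _ _
  _ ≤ wordLength S g₀ + wordLength S g₁ := by
      have := wordLength_inv_le hSgen g₀; omega
  _ ≤ 2 * m₀ := by omega

end Baire

section BWL

open scoped Classical in
/-- Word length of the (unique) group element with translation vector `v`, `0` otherwise. -/
def wlift (S : Set (K n H)) (v : En n) : ℕ :=
  if h : ∃ g : K n H, ν g = v then wordLength S h.choose else 0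

variable {S : Set (K n H)}

lemma wlift_eq {g : K n H} : wlift S (ν g) = wordLength S g := by
  have h : ∃ g' : K n H, ν g' = ν g := ⟨g, rfl⟩
  classical
  simp only [wlift, dif_pos h]
  rw [ν_inj h.choose_spec]

lemma bounded_wordLength (hlc : LocallyCompactSpace ↥H) (hScpt : IsCompact S)
    (hSgen : Subgroup.closure (S : Set (K n H)) = ⊤) (R : ℝ) :
    ∃ N : ℕ, ∀ g : K n H, ‖ν g‖ ≤ R → wordLength S g ≤ N := by
  obtain ⟨N₀, ε, hε, hN₀⟩ := small_norm_bound hlc hScpt hSgen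
  have hA : IsCompact ((L n H : Set (En n)) ∩ Metric.closedBall 0 R) :=
    (isCompact_closedBall (0 : En n) R).inter_left (L_isClosed hlc)
  obtain ⟨t, htA, hcov⟩ := hA.elim_nhds_subcover (fun v => Metric.ball v ε)
    (fun v _ => Metric.ball_mem_nhds v hε)
  refine ⟨t.sup (wlift S) + N₀, fun g hg => ?_⟩
  have hgA : ν g ∈ (L n H : Set (En n)) ∩ Metric.closedBall 0 R :=
    ⟨⟨g, rfl⟩, by rwa [Metric.mem_closedBall, dist_zero_right]⟩
  obtain ⟨v, hvt, hgv⟩ := Set.mem_iUnion₂.mp (hcov hgA)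
  obtain ⟨gv, hgveq⟩ := (htA v hvt).1
  have hd : wordLength S (gv⁻¹ * g) ≤ N₀ := by
    apply hN₀
    rw [ν_mul, ν_inv, hgveq]
    rw [Metric.mem_ball, dist_eq_norm] at hgv
    rw [show -v + ν g = ν g - v by abel]
    exact hgv
  have : g = gv * (gv⁻¹ * g) := by group
  rw [this]
  calc wordLength S (gv * (gv⁻¹ * g)) ≤ wordLength S gv + wordLength S (gv⁻¹ * g) :=
      wordLength_mul_le hSgen _ _
  _ ≤ t.sup (wlift S) + N₀ := by
      have h1 : wordLength S gv ≤ t.sup (wlift S) := by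
        have := Finset.le_sup (f := wlift S) hvt
        rwa [← hgveq, wlift_eq] at this
      omega

end BWL

/-- The maximal linear subspace contained in `L`. -/
def V0 (n : ℕ) (H : Subgroup (IsomE n)) : Submodule ℝ (En n) where
  carrier := {x | ∀ t : ℝ, t • x ∈ L n H}
  zero_mem' := fun t => by rw [smul_zero]; exact (L n H).zero_mem
  add_mem' := fun {a b} ha hb t => by rw [smul_add]; exact (L n H).add_mem (ha t) (hb t)
  smul_mem' := fun c x hx t => by rw [smul_smul]; exact hx (t * c)

lemma V0_sub_L {x : En n} (hx : x ∈ V0 n H) : x ∈ L n H := by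
  have := hx 1; rwa [one_smul] at this

section V0bound
variable {S : Set (K n H)}

lemma V0_bound (hlc : LocallyCompactSpace ↥H) (hScpt : IsCompact S)
    (hSgen : Subgroup.closure (S : Set (K n H)) = ⊤) :
    ∃ N₁ : ℕ, ∀ g : K n H, ν g ∈ V0 n H →
      (wordLength S g : ℝ) ≤ N₁ * ‖ν g‖ + 2 * N₁ := by
  obtain ⟨N₁, hN₁⟩ := bounded_wordLength hlc hScpt hSgen 1
  refine ⟨N₁, fun g hg => ?_⟩
  set v := ν g with hv
  set k : ℕ := ⌈‖v‖⌉₊ + 1 with hk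
  have hkpos : 0 < (k:ℝ) := by positivity
  have hq : (k:ℝ)⁻¹ • v ∈ V0 n H := (V0 n H).smul_mem _ hg
  obtain ⟨gq, hgq⟩ := (V0_sub_L hq : _)
  have hqnorm : ‖ν gq‖ ≤ 1 := by
    rw [hgq, norm_smul, norm_inv, Real.norm_natCast]
    rw [inv_mul_le_iff₀ hkpos]
    calc ‖v‖ ≤ ⌈‖v‖⌉₊ := Nat.le_ceil _
    _ ≤ (k:ℝ) := by rw [hk]; exact_mod_cast Nat.le_succ _
    _ ≤ (k:ℝ) * 1 := by linarith
  have hwq : wordLength S gq ≤ N₁ := hN₁ gq hqnorm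
  have hgpow : g = gq ^ k := by
    apply ν_inj
    rw [ν_pow, hgq, ← Nat.cast_smul_eq_nsmul ℝ, smul_smul,
      mul_inv_cancel₀ (ne_of_gt hkpos), one_smul]
  have hwg : wordLength S g ≤ k * N₁ := by
    rw [hgpow]
    calc wordLength S (gq ^ k) ≤ k * wordLength S gq := wordLength_pow_le hSgen _ _
    _ ≤ k * N₁ := Nat.mul_le_mul_left _ hwq
  have hkle : (k : ℝ) ≤ ‖v‖ + 2 := by
    rw [hk]
    push_cast
    have := Nat.ceil_lt_add_one (norm_nonneg v)
    linarith
  calc (wordLength S g : ℝ) ≤ (k : ℝ) * N₁ := by exact_mod_cast hwg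
  _ ≤ (‖v‖ + 2) * N₁ := by
      apply mul_le_mul_of_nonneg_right hkle (by positivity)
  _ = N₁ * ‖v‖ + 2 * N₁ := by ring

end V0bound

lemma lambda_discrete (hlc : LocallyCompactSpace ↥H) :
    ∃ ε > (0:ℝ), ∀ x : En n, x ∈ L n H → x ∈ (V0 n H)ᗮ → ‖x‖ < ε → x = 0 := by
  by_contra hcon
  push_neg at hcon
  have hstep : ∀ j : ℕ, ∃ x : En n, x ∈ L n H ∧ x ∈ (V0 n H)ᗮ ∧ ‖x‖ < 1/(j+1) ∧ x ≠ 0 := by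
    intro j
    obtain ⟨x, h1, h2, h3, h4⟩ := hcon (1/(j+1)) (by positivity)
    exact ⟨x, h1, h2, h3, h4⟩
  choose x hxL hxO hxn hx0 using hstep
  have hxpos : ∀ j, 0 < ‖x j‖ := fun j => norm_pos_iff.mpr (hx0 j)
  set u : ℕ → En n := fun j => ‖x j‖⁻¹ • x j with hu
  have hus : ∀ j, u j ∈ Metric.sphere (0 : En n) 1 := by
    intro j
    rw [Metric.mem_sphere, dist_zero_right, hu, norm_smul, norm_inv, norm_norm,
      inv_mul_cancel₀ (ne_of_gt (hxpos j))]
  obtain ⟨a, has, φ, hφ, hconv⟩ := (isCompact_sphere (0:En n) 1).tendsto_subseq hus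
  have ha1 : ‖a‖ = 1 := by rwa [Metric.mem_sphere, dist_zero_right] at has
  have haO : a ∈ (V0 n H)ᗮ := by
    have hcl : IsClosed ((V0 n H)ᗮ : Set (En n)) := Submodule.closed_of_finiteDimensional _
    exact hcl.mem_of_tendsto hconv (Filter.Eventually.of_forall fun j =>
      Submodule.smul_mem _ _ (hxO (φ j)))
  have haV : a ∈ V0 n H := by
    intro t
    set c : ℕ → En n := fun j => (⌊t / ‖x (φ j)‖⌋ : ℤ) • x (φ j) with hc
    have hcL : ∀ j, c j ∈ L n H := fun j => (L n H).zsmul_mem (hxL (φ j)) _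
    have hct : Filter.Tendsto c Filter.atTop (nhds (t • a)) := by
      have hceq : c = fun j => (((⌊t / ‖x (φ j)‖⌋ : ℝ) * ‖x (φ j)‖)) • u (φ j) := by
        funext j
        show (⌊t / ‖x (φ j)‖⌋ : ℤ) • x (φ j) = _
        rw [hu]
        simp only []
        rw [smul_smul, mul_assoc, mul_inv_cancel₀ (ne_of_gt (hxpos (φ j))), mul_one,
          Int.cast_smul_eq_zsmul]
      have hsq : ∀ j, dist ((⌊t / ‖x (φ j)‖⌋ : ℝ) * ‖x (φ j)‖) t ≤ ‖x (φ j)‖ := by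
        intro j
        set r := ‖x (φ j)‖ with hrdef
        have hr : 0 < r := hxpos (φ j)
        rw [Real.dist_eq, abs_le]
        constructor
        · have h2 := Int.sub_one_lt_floor (t / r)
          have h3 := mul_lt_mul_of_pos_right h2 hr
          rw [sub_mul, div_mul_cancel₀ _ (ne_of_gt hr)] at h3
          linarith
        · have h1 := Int.floor_le (t / r)
          have h3 := mul_le_mul_of_nonneg_right h1 hr.le
          rw [div_mul_cancel₀ _ (ne_of_gt hr)] at h3
          linarith
      have hrt : Filter.Tendsto (fun j => ‖x (φ j)‖) Filter.atTop (nhds 0) := by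
        apply squeeze_zero (fun j => norm_nonneg _) (g := fun j : ℕ => 1/((j:ℝ)+1))
          (fun j => le_trans (hxn (φ j)).le ?_) tendsto_one_div_add_atTop_nhds_zero_nat
        apply one_div_le_one_div_of_le (by positivity)
        have : (j : ℝ) ≤ (φ j : ℝ) := by exact_mod_cast hφ.le_apply
        linarith
      have hsc : Filter.Tendsto (fun j => (⌊t / ‖x (φ j)‖⌋ : ℝ) * ‖x (φ j)‖)
          Filter.atTop (nhds t) :=
        tendsto_iff_dist_tendsto_zero.mpr
          (squeeze_zero (fun j => dist_nonneg) hsq hrt)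
      rw [hceq]
      exact hsc.smul hconv
    exact (L_isClosed hlc).mem_of_tendsto hct (Filter.Eventually.of_forall hcL)
  have : a ∈ (⊥ : Submodule ℝ (En n)) := by
    rw [← (Submodule.orthogonal_disjoint (V0 n H)).eq_bot]
    exact Submodule.mem_inf.mpr ⟨haV, haO⟩
  rw [Submodule.mem_bot] at this
  rw [this, norm_zero] at ha1
  exact absurd ha1 (by norm_num)

lemma wordLength_list_prod_le {G : Type*} [Group G] {S : Set G}
    (hSgen : Subgroup.closure S = ⊤) (l : List G) :
    wordLength S l.prod ≤ (l.map (wordLength S)).sum := by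
  induction l with
  | nil => simp [wordLength_one]
  | cons a t ih =>
    rw [List.prod_cons, List.map_cons, List.sum_cons]
    calc wordLength S (a * t.prod) ≤ wordLength S a + wordLength S t.prod :=
        wordLength_mul_le hSgen _ _
    _ ≤ wordLength S a + (t.map (wordLength S)).sum := by omega

section Lambda
variable {S : Set (K n H)}

lemma lambda_bound (hlc : LocallyCompactSpace ↥H) (hScpt : IsCompact S)
    (hSgen : Subgroup.closure (S : Set (K n H)) = ⊤) :
    ∃ C₂ : ℝ, 0 ≤ C₂ ∧ ∀ g : K n H, ν g ∈ (V0 n H)ᗮ →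
      (wordLength S g : ℝ) ≤ C₂ * ‖ν g‖ := by
  classical
  obtain ⟨ε, hε, hdisc⟩ := lambda_discrete (n := n) (H := H) hlc
  set Λ : AddSubgroup (En n) := (L n H) ⊓ ((V0 n H)ᗮ).toAddSubgroup with hΛ
  set E₁ : Submodule ℝ (En n) := Submodule.span ℝ (Λ : Set (En n)) with hE₁
  set Λ₁ : Submodule ℤ ↥E₁ :=
    AddSubgroup.toIntSubmodule (Λ.comap (E₁.subtype.toAddMonoidHom)) with hΛ₁
  have hmemΛ₁ : ∀ y : ↥E₁, y ∈ Λ₁ ↔ (y : En n) ∈ Λ := fun y => Iff.rfl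
  haveI hdisc₁ : DiscreteTopology ↥Λ₁ := by
    rw [discreteTopology_iff_isOpen_singleton_zero]
    have : ({0} : Set ↥Λ₁) =
        (fun y : ↥Λ₁ => ((y : ↥E₁) : En n)) ⁻¹' (Metric.ball 0 ε) := by
      ext y
      simp only [Set.mem_singleton_iff, Set.mem_preimage, Metric.mem_ball, dist_zero_right]
      constructor
      · rintro rfl; simpa using hε
      · intro hy
        have hyΛ : ((y : ↥E₁) : En n) ∈ Λ := (hmemΛ₁ _).mp y.2
        have := hdisc _ hyΛ.1 hyΛ.2 hy
        ext : 2
        exact this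
    rw [this]
    exact Metric.isOpen_ball.preimage
      (continuous_subtype_val.comp continuous_subtype_val)
  have hΛsub : (Λ : Set (En n)) ⊆ (E₁ : Set (En n)) := Submodule.subset_span
  have himg : E₁.subtype '' (Λ₁ : Set ↥E₁) = (Λ : Set (En n)) := by
    have h1 : (Λ₁ : Set ↥E₁) = (Subtype.val : ↥E₁ → En n) ⁻¹' (Λ : Set (En n)) := rfl
    rw [h1]
    show Subtype.val '' _ = _
    rw [Set.image_preimage_eq_inter_range, Subtype.range_coe]
    exact Set.inter_eq_self_of_subset_left hΛsub
  haveI hzl : IsZLattice ℝ Λ₁ := by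
    constructor
    apply Submodule.map_injective_of_injective (Submodule.injective_subtype E₁)
    rw [Submodule.map_span, himg, Submodule.map_top, Submodule.range_subtype]
  haveI : Module.Finite ℤ ↥Λ₁ := ZLattice.module_finite ℝ Λ₁
  haveI : Module.Free ℤ ↥Λ₁ := ZLattice.module_free ℝ Λ₁
  set b := Module.Free.chooseBasis ℤ ↥Λ₁ with hb
  set br := Module.Basis.ofZLatticeBasis ℝ Λ₁ b with hbr
  have hgb : ∀ i, ∃ g : K n H, ν g = (((b i : ↥Λ₁) : ↥E₁) : En n) := by
    intro i
    have : (((b i : ↥Λ₁) : ↥E₁) : En n) ∈ Λ := (hmemΛ₁ _).mp (b i).2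
    exact this.1
  choose gb hgbeq using hgb
  set f : Module.Free.ChooseBasisIndex ℤ ↥Λ₁ → (↥E₁ →L[ℝ] ℝ) :=
    fun i => LinearMap.toContinuousLinearMap (br.coord i) with hf
  set C₂ : ℝ := ∑ i, ‖f i‖ * (wordLength S (gb i)) with hC₂
  have hC₂0 : 0 ≤ C₂ := Finset.sum_nonneg fun i _ => by positivity
  refine ⟨C₂, hC₂0, fun g hg => ?_⟩
  set v := ν g with hv
  have hvΛ : v ∈ Λ := ⟨⟨g, rfl⟩, hg⟩
  set x : ↥E₁ := ⟨v, hΛsub hvΛ⟩ with hx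
  have hxΛ₁ : x ∈ Λ₁ := (hmemΛ₁ x).mpr hvΛ
  set c : Module.Free.ChooseBasisIndex ℤ ↥Λ₁ → ℤ := fun i => b.repr ⟨x, hxΛ₁⟩ i with hc
  have hrepr : ∀ i, ((c i : ℝ)) = br.repr x i := by
    intro i
    rw [hc]
    exact (Module.Basis.ofZLatticeBasis_repr_apply ℝ Λ₁ b ⟨x, hxΛ₁⟩ i).symm
  -- the decomposition of v
  have hxsum : v = ∑ i, (c i : ℝ) • (((b i : ↥Λ₁) : ↥E₁) : En n) := by
    have h1 : x = ∑ i, br.repr x i • br i := (br.sum_repr x).symm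
    have h2 : (x : En n) = ∑ i, br.repr x i • ((br i : ↥E₁) : En n) := by
      conv_lhs => rw [h1]
      rw [Submodule.coe_sum]
      exact Finset.sum_congr rfl fun i _ => rfl
    have h3 : ∀ i, ((br i : ↥E₁) : En n) = (((b i : ↥Λ₁) : ↥E₁) : En n) := by
      intro i
      rw [hbr, Module.Basis.ofZLatticeBasis_apply]
    calc v = (x : En n) := rfl
    _ = ∑ i, br.repr x i • ((br i : ↥E₁) : En n) := h2
    _ = ∑ i, (c i : ℝ) • (((b i : ↥Λ₁) : ↥E₁) : En n) := by
        refine Finset.sum_congr rfl fun i _ => ?_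
        rw [hrepr i, h3 i]
  -- the group element
  set l : List (K n H) := Finset.univ.toList.map (fun i => gb i ^ (c i)) with hl
  have hgl : g = l.prod := by
    apply ν_inj
    rw [ν_list_prod, hl, List.map_map]
    have : (ν (n := n) (H := H)) ∘ (fun i => gb i ^ c i)
        = fun i => (c i : ℝ) • (((b i : ↥Λ₁) : ↥E₁) : En n) := by
      funext i
      rw [Function.comp_apply, ν_zpow, hgbeq, Int.cast_smul_eq_zsmul]
    rw [this, Finset.sum_map_toList, ← hv, hxsum]
  -- the word length estimate
  have hwl1 : (wordLength S g : ℝ) ≤ ∑ i, ((c i).natAbs : ℝ) * (wordLength S (gb i)) := by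
    rw [hgl]
    have h1 := wordLength_list_prod_le hSgen l
    have h2 : (l.map (wordLength S)).sum = ∑ i, wordLength S (gb i ^ c i) := by
      rw [hl, List.map_map, Finset.sum_map_toList]
      rfl
    rw [h2] at h1
    calc (wordLength S l.prod : ℝ) ≤ ((∑ i, wordLength S (gb i ^ c i) : ℕ) : ℝ) :=
      Nat.cast_le.mpr h1
    _ = ∑ i, (wordLength S (gb i ^ c i) : ℝ) := Nat.cast_sum _ _
    _ ≤ ∑ i, ((c i).natAbs : ℝ) * (wordLength S (gb i)) := by
        apply Finset.sum_le_sum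
        intro i _
        exact_mod_cast wordLength_zpow_le hSgen (gb i) (c i)
  have hcoord : ∀ i, ((c i).natAbs : ℝ) ≤ ‖f i‖ * ‖v‖ := by
    intro i
    have h1 : ((c i).natAbs : ℝ) = |(c i : ℝ)| := by
      rw [Nat.cast_natAbs]; push_cast; rfl
    rw [h1, hrepr i]
    have h2 : br.repr x i = f i x := rfl
    rw [h2]
    have h3 := (f i).le_opNorm x
    rw [Real.norm_eq_abs] at h3
    have h4 : ‖x‖ = ‖v‖ := rfl
    rwa [h4] at h3
  calc (wordLength S g : ℝ) ≤ ∑ i, ((c i).natAbs : ℝ) * (wordLength S (gb i)) := hwl1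
  _ ≤ ∑ i, (‖f i‖ * ‖v‖) * (wordLength S (gb i)) := by
      apply Finset.sum_le_sum
      intro i _
      exact mul_le_mul_of_nonneg_right (hcoord i) (by positivity)
  _ = C₂ * ‖v‖ := by rw [hC₂, Finset.sum_mul]; congr 1; funext i; ring

end Lambda

section Final
variable {S : Set (K n H)}

lemma lower_bound (hlc : LocallyCompactSpace ↥H) (hScpt : IsCompact S)
    (hSgen : Subgroup.closure (S : Set (K n H)) = ⊤) :
    ∃ C D : ℝ, 1 ≤ C ∧ 0 ≤ D ∧
      ∀ g : K n H, (wordLength S g : ℝ) ≤ C * ‖ν g‖ + D := by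
  obtain ⟨N₁, hN₁⟩ := V0_bound hlc hScpt hSgen
  obtain ⟨C₂, hC₂0, hC₂⟩ := lambda_bound hlc hScpt hSgen
  refine ⟨max 1 (N₁ + 2 * C₂), 2 * N₁, le_max_left _ _, by positivity, fun g => ?_⟩
  set v := ν g with hv
  set p : En n := ((V0 n H).orthogonalProjectionOnto v : En n) with hp
  have hpV : p ∈ V0 n H := ((V0 n H).orthogonalProjectionOnto v).2
  have hwO : v - p ∈ (V0 n H)ᗮ := (V0 n H).sub_starProjection_mem_orthogonal v
  have hpL : p ∈ L n H := V0_sub_L hpV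
  have hwL : v - p ∈ L n H := (L n H).sub_mem ⟨g, rfl⟩ hpL
  obtain ⟨gp, hgp⟩ := hpL
  obtain ⟨gw, hgw⟩ := hwL
  have hgsplit : g = gp * gw := by
    apply ν_inj
    rw [ν_mul, hgp, hgw]
    abel
  have hpnorm : ‖p‖ ≤ ‖v‖ := by
    have h1 := ContinuousLinearMap.le_of_opNorm_le _
      (Submodule.orthogonalProjectionOnto_norm_le (V0 n H)) v
    rw [one_mul] at h1
    exact h1
  have hwnorm : ‖v - p‖ ≤ 2 * ‖v‖ := by
    calc ‖v - p‖ ≤ ‖v‖ + ‖p‖ := norm_sub_le _ _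
    _ ≤ 2 * ‖v‖ := by linarith
  have h1 : (wordLength S gp : ℝ) ≤ N₁ * ‖v‖ + 2 * N₁ := by
    have := hN₁ gp (by rw [hgp]; exact hpV)
    rw [hgp] at this
    have hb := mul_le_mul_of_nonneg_left hpnorm (by positivity : (0:ℝ) ≤ (N₁:ℝ))
    linarith
  have h2 : (wordLength S gw : ℝ) ≤ C₂ * (2 * ‖v‖) := by
    have := hC₂ gw (by rw [hgw]; exact hwO)
    rw [hgw] at this
    have hb := mul_le_mul_of_nonneg_left hwnorm hC₂0
    linarith
  have h3 : (wordLength S g : ℝ) ≤ (wordLength S gp : ℝ) + (wordLength S gw : ℝ) := by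
    rw [hgsplit]
    exact_mod_cast wordLength_mul_le hSgen gp gw
  have h4 : (N₁ + 2 * C₂ : ℝ) ≤ max 1 (N₁ + 2 * C₂) := le_max_right _ _
  have h5 : (0:ℝ) ≤ ‖v‖ := norm_nonneg _
  calc (wordLength S g : ℝ) ≤ (N₁ + 2 * C₂) * ‖v‖ + 2 * N₁ := by linarith
  _ ≤ max 1 (N₁ + 2 * C₂) * ‖v‖ + 2 * N₁ := by nlinarith

end Final
end QIE


/-- **The translation part embeds quasi-isometrically into `T ≅ ℝⁿ`.**
For a split, locally compact subgroup `H ≤ Isom(𝔼ⁿ)` and any word metric on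
`T_H = T ∩ H` coming from a compact generating set `S`, the map `t^λ ↦ λ` is a
quasi-isometric embedding into Euclidean space. -/
theorem translation_part_qi_embedding (n : ℕ) (H : Subgroup (IsomE n))
    (hsplit : Splits H) (hlc : LocallyCompactSpace ↥H)
    (S : Set ↥(H ⊓ transSubgroup n)) (hScpt : IsCompact S)
    (hSgen : Subgroup.closure S = ⊤) :
    ∃ C D : ℝ, 1 ≤ C ∧ 0 ≤ D ∧
      ∀ g g' : ↥(H ⊓ transSubgroup n),
        (1 / C) * (wordLength S (g⁻¹ * g') : ℝ) - D ≤
            ‖tPart (g : IsomE n) - tPart (g' : IsomE n)‖ ∧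
          ‖tPart (g : IsomE n) - tPart (g' : IsomE n)‖ ≤
            C * (wordLength S (g⁻¹ * g') : ℝ) + D := by
  obtain ⟨M, hM1, hupper⟩ := QIE.norm_le_wordLength hScpt hSgen
  obtain ⟨C₁, D₁, hC₁, hD₁, hlower⟩ := QIE.lower_bound hlc hScpt hSgen
  set C := max M C₁ with hC
  refine ⟨C, D₁, le_trans hM1 (le_max_left _ _), hD₁, fun g g' => ?_⟩
  have hCpos : (0:ℝ) < C := lt_of_lt_of_le one_pos (le_trans hM1 (le_max_left _ _))
  set k := g⁻¹ * g' with hk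
  have hnorm : ‖tPart (g : IsomE n) - tPart (g' : IsomE n)‖ = ‖QIE.ν k‖ := by
    have h1 : QIE.ν k = QIE.ν g' - QIE.ν g := by
      rw [hk, QIE.ν_mul, QIE.ν_inv]; abel
    have h2 : tPart (g : IsomE n) - tPart (g' : IsomE n) = QIE.ν g - QIE.ν g' := rfl
    rw [h2, h1, ← norm_neg]
    congr 1
    abel
  rw [hnorm]
  constructor
  · have h1 := hlower k
    have h2 : C₁ * ‖QIE.ν k‖ ≤ C * ‖QIE.ν k‖ :=
      mul_le_mul_of_nonneg_right (le_max_right _ _) (norm_nonneg _)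
    have h3 : (wordLength S k : ℝ) ≤ C * ‖QIE.ν k‖ + D₁ := by linarith
    have h4 : (wordLength S k : ℝ) / C ≤ ‖QIE.ν k‖ + D₁ := by
      rw [div_le_iff₀ hCpos]
      have h5 : (‖QIE.ν k‖ + D₁) * C = C * ‖QIE.ν k‖ + D₁ * C := by ring
      rw [h5]
      have hD : D₁ ≤ D₁ * C := le_mul_of_one_le_right hD₁ (le_trans hM1 (le_max_left _ _))
      linarith
    calc (1/C) * (wordLength S k : ℝ) - D₁ = (wordLength S k : ℝ)/C - D₁ := by ring
    _ ≤ ‖QIE.ν k‖ := by linarith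
  · have h1 := hupper k
    have h2 : M * (wordLength S k : ℝ) ≤ C * (wordLength S k : ℝ) :=
      mul_le_mul_of_nonneg_right (le_max_left _ _) (Nat.cast_nonneg _)
    have : (0:ℝ) ≤ D₁ := hD₁
    linarith
end
end

section
/- Let H = T_H ⋊ H₀ be a split group of Euclidean isometries and let h = t^λ h₀ and h′ = t^{λ′} h₀′ be conjugate elements of H, where λ, λ′ ∈ L_H and h₀, h₀′ ∈ H₀. Then the coconjugation set satisfies C_H(h,h′) = ⨆_{u ∈ C_{H₀}^{λ,λ′}(h₀,h₀′)} t^{η_u + (Fix(h₀′) ∩ L_H)} u (a disjoint union over the translation-compatible part), where for each u the element η_u ∈ L_H is a particular solution of the equation λ′ − uλ = (Id − h₀′)η. -/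
noncomputable section

/-- `Mod_H(g) = (g − Id) L_H`. -/
def ModH {n : ℕ} (H : Subgroup (IsomE n)) (g : OrthGrp n) : Set (En n) :=
  (fun x => g x - x) '' latticeLH H

/-- The translation-compatible part `C_{H₀}^{λ,λ'}(h₀,h₀')` of the coconjugation set of
the spherical parts: those `u ∈ H₀` with `u h₀ u⁻¹ = h₀'` and `λ' − uλ ∈ Mod_H(h₀')`. -/
def TCpart {n : ℕ} (H : Subgroup (IsomE n)) (h h' : IsomE n) : Set (OrthGrp n) :=
  {u | SemidirectProduct.inr u ∈ H ∧ u * h.right * u⁻¹ = h'.right ∧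
    tPart h' - u (tPart h) ∈ ModH H h'.right}

/-- The piece `t^{η_u + (Fix(h₀') ∩ L_H)} u` of the coconjugation set. -/
def coconjPiece {n : ℕ} (H : Subgroup (IsomE n)) (h' : IsomE n)
    (η : OrthGrp n → En n) (u : OrthGrp n) : Set (IsomE n) :=
  (fun μ => SemidirectProduct.inl (Multiplicative.ofAdd (η u + μ)) *
      SemidirectProduct.inr u) '' {μ | h'.right μ = μ ∧ μ ∈ latticeLH H}

lemma rotAction_apply {n : ℕ} (u : OrthGrp n) (m : Multiplicative (En n)) :
    rotAction n u m = Multiplicative.ofAdd (u (Multiplicative.toAdd m)) := rfl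

lemma lattice_neg {n : ℕ} {H : Subgroup (IsomE n)} {v : En n} (hv : v ∈ latticeLH H) :
    -v ∈ latticeLH H := by
  have := H.inv_mem hv
  simpa [latticeLH, ← map_inv] using this

lemma lattice_add {n : ℕ} {H : Subgroup (IsomE n)} {v w : En n}
    (hv : v ∈ latticeLH H) (hw : w ∈ latticeLH H) : v + w ∈ latticeLH H := by
  have := H.mul_mem hv hw
  simpa [latticeLH, ← map_mul] using this

lemma lattice_sub {n : ℕ} {H : Subgroup (IsomE n)} {v w : En n}
    (hv : v ∈ latticeLH H) (hw : w ∈ latticeLH H) : v - w ∈ latticeLH H := by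
  simpa [sub_eq_add_neg] using lattice_add hv (lattice_neg hw)

/-- Characterization of membership in the coconjugation set. -/
lemma mem_coconj_iff {n : ℕ} {H : Subgroup (IsomE n)} (hsplit : Splits H)
    (h h' k : IsomE n) :
    (k ∈ H ∧ k * h * k⁻¹ = h') ↔
      (SemidirectProduct.inr k.right ∈ H ∧
        k.right * h.right * k.right⁻¹ = h'.right ∧
        tPart k ∈ latticeLH H ∧
        tPart h' = tPart k + k.right (tPart h) - h'.right (tPart k)) := by
  have hleft : (k * h * k⁻¹).left =
      k.left * rotAction n k.right h.left *
        rotAction n (k.right * h.right * k.right⁻¹) k.left⁻¹ := by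
    simp [SemidirectProduct.mul_left, SemidirectProduct.inv_left,
      SemidirectProduct.mul_right, map_mul, mul_assoc]
  constructor
  · rintro ⟨hkH, hconj⟩
    obtain ⟨hl, hr⟩ := hsplit k hkH
    have hright : k.right * h.right * k.right⁻¹ = h'.right := by
      have := congrArg SemidirectProduct.right hconj
      simpa [SemidirectProduct.mul_right] using this
    refine ⟨hr, hright, ?_, ?_⟩
    · simpa [latticeLH, tPart] using hl
    · have := congrArg SemidirectProduct.left hconj
      rw [hleft, hright] at this
      have := congrArg Multiplicative.toAdd this
      simp only [toAdd_mul, toAdd_inv, rotAction_apply, toAdd_ofAdd, map_neg] at this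
      simp only [tPart]
      rw [← this]; abel
  · rintro ⟨hr, hright, hlat, heq⟩
    have hkH : k ∈ H := by
      rw [← SemidirectProduct.inl_left_mul_inr_right k]
      refine H.mul_mem ?_ hr
      simpa [latticeLH, tPart] using hlat
    refine ⟨hkH, ?_⟩
    refine SemidirectProduct.ext ?_ ?_
    · apply Multiplicative.toAdd.injective
      rw [hleft, hright]
      simp only [toAdd_mul, toAdd_inv, rotAction_apply, toAdd_ofAdd, map_neg]
      simp only [tPart] at heq
      rw [heq]; abel
    · simpa [SemidirectProduct.mul_right] using hright

/-- **Coconjugation theorem.**  Let `H = T_H ⋊ H₀` be a split group of Euclidean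
isometries and `h = t^λ h₀`, `h' = t^{λ'} h₀'` conjugate elements of `H`.  Then the
coconjugation set `C_H(h,h') = {k ∈ H : khk⁻¹ = h'}` is the disjoint union, over `u` in
the translation-compatible part, of the sets `t^{η_u + (Fix(h₀') ∩ L_H)} u`, where each
`η_u ∈ L_H` is a particular solution of `λ' − uλ = (Id − h₀')η`. -/
theorem coconjugation (n : ℕ) (H : Subgroup (IsomE n)) (hsplit : Splits H)
    (h h' : IsomE n) (hh : h ∈ H) (hh' : h' ∈ H)
    (hconj : ∃ k ∈ H, k * h * k⁻¹ = h') :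
    ∃ η : OrthGrp n → En n,
      (∀ u ∈ TCpart H h h', η u ∈ latticeLH H ∧
          tPart h' - u (tPart h) = η u - h'.right (η u)) ∧
      ({k ∈ (H : Set (IsomE n)) | k * h * k⁻¹ = h'} =
          ⋃ u ∈ TCpart H h h', coconjPiece H h' η u) ∧
      (TCpart H h h').PairwiseDisjoint (coconjPiece H h' η) := by
  classical
  have key : ∀ u ∈ TCpart H h h', ∃ e : En n, e ∈ latticeLH H ∧
      tPart h' - u (tPart h) = e - h'.right e := by
    rintro u ⟨-, -, ν, hν, hνeq⟩
    refine ⟨-ν, lattice_neg hν, ?_⟩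
    rw [← hνeq]
    simp only [map_neg]
    abel
  set η : OrthGrp n → En n :=
    fun u => if hu : u ∈ TCpart H h h' then (key u hu).choose else 0 with hηdef
  have ηspec : ∀ u, (hu : u ∈ TCpart H h h') → η u ∈ latticeLH H ∧
      tPart h' - u (tPart h) = η u - h'.right (η u) := by
    intro u hu
    simp only [hηdef, dif_pos hu]
    exact (key u hu).choose_spec
  refine ⟨η, fun u hu => ηspec u hu, ?_, ?_⟩
  · ext k
    simp only [Set.mem_setOf_eq, Set.mem_iUnion]
    constructor
    · rintro ⟨hkH, hconj⟩
      obtain ⟨hr, hright, hlat, heq⟩ := (mem_coconj_iff hsplit h h' k).mp ⟨hkH, hconj⟩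
      have hu : k.right ∈ TCpart H h h' := by
        refine ⟨hr, hright, -(tPart k), lattice_neg hlat, ?_⟩
        simp only [map_neg]
        rw [heq]; abel
      refine ⟨k.right, hu, tPart k - η k.right, ⟨?_, lattice_sub hlat (ηspec _ hu).1⟩, ?_⟩
      · have hA : tPart k - h'.right (tPart k) = η k.right - h'.right (η k.right) := by
          rw [← (ηspec _ hu).2, heq]; abel
        rw [map_sub]
        exact (sub_eq_sub_iff_sub_eq_sub.mp hA).symm
      · have hc : η k.right + (tPart k - η k.right) = tPart k := by abel
        show SemidirectProduct.inl
            (Multiplicative.ofAdd (η k.right + (tPart k - η k.right))) *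
          SemidirectProduct.inr k.right = k
        rw [hc]
        simp [tPart, SemidirectProduct.inl_left_mul_inr_right]
    · rintro ⟨u, hu, μ, ⟨hfix, hμ⟩, rfl⟩
      obtain ⟨hr, hright, -⟩ := id hu
      obtain ⟨hηlat, hηeq⟩ := ηspec u hu
      apply (mem_coconj_iff hsplit h h' _).mpr
      have hR : (SemidirectProduct.inl (Multiplicative.ofAdd (η u + μ)) *
          SemidirectProduct.inr u : IsomE n).right = u := by simp
      have hT : tPart (SemidirectProduct.inl (Multiplicative.ofAdd (η u + μ)) *
          SemidirectProduct.inr u : IsomE n) = η u + μ := by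
        simp [tPart]
      rw [hR, hT]
      refine ⟨hr, hright, lattice_add hηlat hμ, ?_⟩
      rw [map_add, hfix]
      have : tPart h' = (η u - h'.right (η u)) + u (tPart h) := by rw [← hηeq]; abel
      rw [this]; abel
  · intro u hu v hv huv
    simp only [Function.onFun]
    rw [Set.disjoint_left]
    rintro k ⟨μ, -, rfl⟩ ⟨ν, -, hk⟩
    exact huv (by simpa using (congrArg SemidirectProduct.right hk).symm)
end
end
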